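/- arXiv:2309.13447 — 10 statements merged into one kernel-verified Lean document; each statement's English description precedes it below -/
import Mathlib

section
/- Let (p_n)_{n≥1} be a sequence of polynomials over ℂ with deg p_1 ≥ 1 and deg p_n ≥ 2 for all n ≥ 2, and set α := limsup_{n→∞} 1/(deg p_n). Assume there exist r > 0 and a function h : ℂ → ℝ with h(z) − α·log|z| → ∞ as |z| → ∞, such that: (i) every zero of every p_n lies in the closed disk of radius r centered at 0; (ii) for every z ∈ ℂ with |z| > r there exist a neighbourhood U of z and an integer N > 1 such that for all n ≥ N and all ζ ∈ U one has (1/deg p_n)·log⁺|p_n(ζ)| > h(ζ). Then there exists R > 0 such that for every n ≥ 2 and every z ∈ ℂ with |z| ≥ R one has |p_n(z)| ≥ e·|z|. -/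
open Filter Polynomial

lemma msum_pow_le_prod {s : Multiset ℂ} {c : ℝ} (hc : 0 ≤ c) {f : ℂ → ℝ}
    (hf : ∀ a ∈ s, c ≤ f a) : c ^ Multiset.card s ≤ (s.map f).prod := by
  induction s using Multiset.induction with
  | empty => simp
  | cons a s ih =>
    simp only [Multiset.map_cons, Multiset.prod_cons, Multiset.card_cons, pow_succ']
    have h1 := hf a (Multiset.mem_cons_self a s)
    have hih := ih (fun b hb => hf b (Multiset.mem_cons_of_mem hb))
    exact mul_le_mul h1 hih (pow_nonneg hc _) (hc.trans h1)

lemma msum_prod_le_pow {s : Multiset ℂ} {C : ℝ} {f : ℂ → ℝ}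
    (h0 : ∀ a ∈ s, 0 ≤ f a) (hf : ∀ a ∈ s, f a ≤ C) :
    (s.map f).prod ≤ C ^ Multiset.card s := by
  induction s using Multiset.induction with
  | empty => simp
  | cons a s ih =>
    simp only [Multiset.map_cons, Multiset.prod_cons, Multiset.card_cons, pow_succ']
    have h1 := hf a (Multiset.mem_cons_self a s)
    have h0a := h0 a (Multiset.mem_cons_self a s)
    have hih := ih (fun b hb => h0 b (Multiset.mem_cons_of_mem hb))
      (fun b hb => hf b (Multiset.mem_cons_of_mem hb))
    have hprod0 : (0:ℝ) ≤ (Multiset.map f s).prod :=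
      Multiset.prod_nonneg (by
        intro x hx
        obtain ⟨b, hb, rfl⟩ := Multiset.mem_map.1 hx
        exact h0 b (Multiset.mem_cons_of_mem hb))
    exact mul_le_mul h1 hih hprod0 (h0a.trans h1)

lemma abs_eval_eq (q : Polynomial ℂ) (z : ℂ) :
    ‖q.eval z‖
      = ‖q.leadingCoeff‖ * (q.roots.map (fun a => ‖z - a‖)).prod := by
  conv_lhs => rw [(IsAlgClosed.splits q).eq_prod_roots]
  rw [eval_mul, eval_C, norm_mul, Polynomial.eval_multiset_prod, Multiset.map_map]
  simp [Multiset.map_map, Function.comp_def]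
  left
  simpa [Multiset.map_map, Function.comp_def] using
    map_multiset_prod (normHom : ℂ →*₀ ℝ) (Multiset.map (fun x => z - x) q.roots)

lemma card_roots_eq' (q : Polynomial ℂ) :
    Multiset.card q.roots = q.natDegree := by
  have h := (IsAlgClosed.splits q).natDegree_eq_card_roots
  exact h.symm

lemma eval_lower (q : Polynomial ℂ) (r : ℝ) (hr : 0 ≤ r)
    (hroots : ∀ a ∈ q.roots, ‖a‖ ≤ r) (z : ℂ) (hz : r ≤ ‖z‖) :
    ‖q.leadingCoeff‖ * (‖z‖ - r) ^ q.natDegree ≤ ‖q.eval z‖ := by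
  rw [abs_eval_eq, ← card_roots_eq']
  refine mul_le_mul_of_nonneg_left ?_ (norm_nonneg _)
  refine msum_pow_le_prod (by linarith) ?_
  intro a ha
  have h1 := hroots a ha
  have h2 := norm_sub_norm_le z a
  linarith

lemma eval_upper (q : Polynomial ℂ) (r : ℝ)
    (hroots : ∀ a ∈ q.roots, ‖a‖ ≤ r) (z : ℂ) :
    ‖q.eval z‖
      ≤ ‖q.leadingCoeff‖ * (‖z‖ + r) ^ q.natDegree := by
  rw [abs_eval_eq, ← card_roots_eq']
  refine mul_le_mul_of_nonneg_left ?_ (norm_nonneg _)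
  refine msum_prod_le_pow (fun a _ => norm_nonneg _) ?_
  intro a ha
  calc ‖z - a‖ ≤ ‖z‖ + ‖a‖ := norm_sub_le z a
    _ ≤ ‖z‖ + r := by linarith [hroots a ha]

lemma key_single (q : Polynomial ℂ) (hd : 2 ≤ q.natDegree) (r L : ℝ) (hr : 0 < r)
    (hroots : ∀ a ∈ q.roots, ‖a‖ ≤ r)
    (hL : L ≤ ‖q.leadingCoeff‖) (hL0 : 0 < L)
    (z : ℂ) (hz : max (max (2*r) (r+1)) (r + 4 * Real.exp 1 / L) ≤ ‖z‖) :
    Real.exp 1 * ‖z‖ ≤ ‖q.eval z‖ := by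
  set t := ‖z‖ with ht
  have h2r : 2*r ≤ t := le_trans (le_max_of_le_left (le_max_left _ _)) hz
  have hr1 : r + 1 ≤ t := le_trans (le_max_of_le_left (le_max_right _ _)) hz
  have h4e : r + 4 * Real.exp 1 / L ≤ t := le_trans (le_max_right _ _) hz
  have hLt : 4 * Real.exp 1 ≤ L * (t - r) := by
    have := (div_le_iff₀ hL0).1 (by linarith : 4 * Real.exp 1 / L ≤ t - r)
    linarith [this]
  have he : (0:ℝ) < Real.exp 1 := Real.exp_pos 1
  have hlow := eval_lower q r hr.le hroots z (by linarith)
  have hpow : (t - r) ^ 2 ≤ (t - r) ^ q.natDegree :=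
    pow_le_pow_right₀ (by linarith) hd
  have hmono : L * (t - r) ^ q.natDegree ≤
      ‖q.leadingCoeff‖ * (t - r) ^ q.natDegree :=
    mul_le_mul_of_nonneg_right hL (pow_nonneg (by linarith) _)
  have : L * (t - r) ^ 2 ≤ ‖q.eval z‖ := by
    calc L * (t - r) ^ 2 ≤ L * (t - r) ^ q.natDegree :=
          mul_le_mul_of_nonneg_left hpow hL0.le
      _ ≤ _ := hmono.trans hlow
  nlinarith [this, hLt, he, hr, h2r]

lemma key_uniform (q : Polynomial ℂ) (hd : 2 ≤ q.natDegree) (r K : ℝ) (hr : 0 < r)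
    (hK : r < K) (hroots : ∀ a ∈ q.roots, ‖a‖ ≤ r)
    (hlead : 1 ≤ ‖q.leadingCoeff‖ * K ^ q.natDegree)
    (z : ℂ) (hz : max (r + K) (4 * Real.exp 1 * K ^ 2) ≤ ‖z‖) :
    Real.exp 1 * ‖z‖ ≤ ‖q.eval z‖ := by
  set t := ‖z‖ with ht
  have hK0 : (0:ℝ) < K := hr.trans hK
  have hKd : (0:ℝ) < K ^ q.natDegree := pow_pos hK0 _
  have hrK : r + K ≤ t := le_trans (le_max_left _ _) hz
  have h4e : 4 * Real.exp 1 * K ^ 2 ≤ t := le_trans (le_max_right _ _) hz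
  have he : (0:ℝ) < Real.exp 1 := Real.exp_pos 1
  have hx1 : 1 ≤ (t - r) / K := (le_div_iff₀ hK0).2 (by linarith)
  have hlow := eval_lower q r hr.le hroots z (by simp only [← ht]; linarith)
  have hL : 1 / K ^ q.natDegree ≤ ‖q.leadingCoeff‖ :=
    (div_le_iff₀ hKd).2 (by linarith)
  have step1 : ((t - r) / K) ^ q.natDegree ≤ ‖q.eval z‖ := by
    calc ((t - r) / K) ^ q.natDegree = (t - r) ^ q.natDegree / K ^ q.natDegree := div_pow _ _ _
      _ = 1 / K ^ q.natDegree * (t - r) ^ q.natDegree := by ring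
      _ ≤ ‖q.leadingCoeff‖ * (t - r) ^ q.natDegree :=
          mul_le_mul_of_nonneg_right hL (pow_nonneg (by linarith) _)
      _ ≤ _ := hlow
  have step2 : ((t - r) / K) ^ 2 ≤ ((t - r) / K) ^ q.natDegree :=
    pow_le_pow_right₀ hx1 hd
  have step3 : Real.exp 1 * t ≤ ((t - r) / K) ^ 2 := by
    rw [div_pow, le_div_iff₀ (by positivity)]
    nlinarith [h4e, he, hr, hK, hrK]
  linarith

theorem guided_growth_lemma
    (p : ℕ → Polynomial ℂ)
    (hdeg1 : 1 ≤ (p 1).natDegree)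
    (hdeg : ∀ n ≥ 2, 2 ≤ (p n).natDegree)
    (α : ℝ)
    (hα : α = Filter.limsup (fun n => (1 : ℝ) / ((p n).natDegree : ℝ)) Filter.atTop)
    (r : ℝ) (hr : 0 < r)
    (h : ℂ → ℝ)
    (hh : Filter.Tendsto (fun z : ℂ => h z - α * Real.log (‖z‖))
      (Filter.comap (fun z : ℂ => ‖z‖) Filter.atTop) Filter.atTop)
    (hzeros : ∀ n ≥ 1, ∀ z : ℂ, (p n).eval z = 0 → ‖z‖ ≤ r)
    (hgrow : ∀ z : ℂ, r < ‖z‖ →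
      ∃ U ∈ nhds z, ∃ N : ℕ, 1 < N ∧ ∀ n ≥ N, ∀ ζ ∈ U,
        h ζ < (1 / ((p n).natDegree : ℝ)) * max 0 (Real.log (‖(p n).eval ζ‖))) :
    ∃ R : ℝ, 0 < R ∧ ∀ n ≥ 2, ∀ z : ℂ, R ≤ ‖z‖ →
      Real.exp 1 * ‖z‖ ≤ ‖(p n).eval z‖ := by
  -- roots of every p n (n ≥ 1) lie in the disk of radius r
  have hroots : ∀ n, 1 ≤ n → ∀ a ∈ (p n).roots, ‖a‖ ≤ r := by
    intro n hn a ha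
    exact hzeros n hn a (Polynomial.isRoot_of_mem_roots ha)
  -- α is nonnegative
  have hα0 : 0 ≤ α := by
    rw [hα]
    refine Filter.le_limsup_of_frequently_le
      (Filter.Eventually.frequently (Filter.Eventually.of_forall (fun n => by positivity))) ?_
    refine Filter.isBoundedUnder_of ⟨1, fun n => ?_⟩
    rcases Nat.eq_zero_or_pos (p n).natDegree with h0 | h0
    · simp [h0]
    · rw [div_le_one (by exact_mod_cast h0)]
      exact_mod_cast h0
  -- extract a radius B beyond which h z ≥ α log |z|
  have hev := hh.eventually (Filter.eventually_ge_atTop (0:ℝ))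
  rw [Filter.eventually_comap] at hev
  obtain ⟨B, hB⟩ := Filter.eventually_atTop.1 hev
  set ρ : ℝ := max B (r + 1) with hρ
  have hρr : r < ρ := lt_of_lt_of_le (by linarith) (le_max_right _ _)
  have hρ1 : 1 ≤ ρ := le_trans (by linarith) (le_max_right _ _)
  set ζ₀ : ℂ := (ρ : ℂ) with hζ₀
  have habs : ‖ζ₀‖ = ρ := by
    rw [hζ₀, Complex.norm_real, Real.norm_eq_abs, abs_of_pos (by linarith)]
  have hζ₀h : 0 ≤ h ζ₀ := by
    have h1 := hB ρ (le_max_left _ _) ζ₀ habs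
    have h2 : 0 ≤ α * Real.log (‖ζ₀‖) := by
      rw [habs]
      exact mul_nonneg hα0 (Real.log_nonneg hρ1)
    linarith
  -- apply the growth hypothesis at ζ₀
  obtain ⟨U, hU, N, hN1, hg⟩ := hgrow ζ₀ (by rw [habs]; exact hρr)
  set K : ℝ := ρ + r with hK
  have hKr : r < K := by simp only [hK]; linarith
  -- for n ≥ N, 1 ≤ |lead| * K ^ deg
  have hlead : ∀ n, N ≤ n → 2 ≤ n →
      1 ≤ ‖(p n).leadingCoeff‖ * K ^ (p n).natDegree := by
    intro n hnN hn2
    have hd2 := hdeg n hn2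
    have hgn := hg n hnN ζ₀ (mem_of_mem_nhds hU)
    have hmax : 0 < max 0 (Real.log (‖(p n).eval ζ₀‖)) := by
      by_contra hc
      push_neg at hc
      have := mul_nonpos_of_nonneg_of_nonpos
        (by positivity : (0:ℝ) ≤ 1 / ((p n).natDegree : ℝ)) hc
      linarith
    have hlog : 0 < Real.log (‖(p n).eval ζ₀‖) :=
      (lt_max_iff.1 hmax).resolve_left (lt_irrefl 0)
    have h1lt : 1 ≤ ‖(p n).eval ζ₀‖ := by
      by_contra hc
      push_neg at hc
      exact hlog.not_ge (Real.log_nonpos (norm_nonneg _) hc.le)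
    have hup := eval_upper (p n) r (hroots n (by omega)) ζ₀
    rw [habs] at hup
    exact h1lt.trans hup
  -- thresholds
  set Rn : ℕ → ℝ := fun n =>
    max (max (2*r) (r+1)) (r + 4 * Real.exp 1 / ‖(p n).leadingCoeff‖) with hRn
  set R : ℝ := 1 + max (r + K) (4 * Real.exp 1 * K ^ 2)
    + ∑ n ∈ Finset.Ico 2 N, max (Rn n) 0 with hRdef
  have hsum0 : 0 ≤ ∑ n ∈ Finset.Ico 2 N, max (Rn n) 0 :=
    Finset.sum_nonneg (fun i _ => le_max_right _ _)
  have hmax0 : r + K ≤ max (r + K) (4 * Real.exp 1 * K ^ 2) := le_max_left _ _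
  refine ⟨R, by simp only [hRdef]; nlinarith [hr, hKr], ?_⟩
  intro n hn2 z hz
  rcases le_or_gt N n with hnN | hnN
  · -- uniform case
    refine key_uniform (p n) (hdeg n hn2) r K hr hKr (hroots n (by omega))
      (hlead n hnN hn2) z (le_trans ?_ hz)
    simp only [hRdef]
    linarith
  · -- finitely many small n
    have hmem : n ∈ Finset.Ico 2 N := Finset.mem_Ico.2 ⟨hn2, hnN⟩
    have hne : p n ≠ 0 := by
      intro h0
      have := hdeg n hn2
      rw [h0, Polynomial.natDegree_zero] at this
      omega
    have hL0 : 0 < ‖(p n).leadingCoeff‖ := by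
      rw [norm_pos_iff]
      exact Polynomial.leadingCoeff_ne_zero.2 hne
    refine key_single (p n) (hdeg n hn2) r (‖(p n).leadingCoeff‖) hr
      (hroots n (by omega)) le_rfl hL0 z (le_trans ?_ hz)
    have h1 : Rn n ≤ max (Rn n) 0 := le_max_left _ _
    have h2 : max (Rn n) 0 ≤ ∑ m ∈ Finset.Ico 2 N, max (Rn m) 0 :=
      Finset.single_le_sum (f := fun m => max (Rn m) 0) (fun i _ => le_max_right _ _) hmem
    simp only [hRdef, hRn] at *
    nlinarith [hr, hKr, h1, h2]
end

section
/- Let (p_n)_{n≥1} be a sequence of polynomials over ℂ with deg p_1 ≥ 1 and deg p_n ≥ 2 for all n ≥ 2, and set α := limsup_{n→∞} 1/(deg p_n). Assume there exist r > 0 and a function h : ℂ → ℝ with h(z) − α·log|z| → ∞ as |z| → ∞, such that: (i) every zero of every p_n lies in the closed disk of radius r centered at 0; (ii) for every z ∈ ℂ with |z| > r there exist a neighbourhood U of z and an integer N > 1 such that for all n ≥ N and all ζ ∈ U one has (1/deg p_n)·log⁺|p_n(ζ)| > h(ζ). Then there exists ϱ > 0 such that for every R ≥ ϱ and every n ≥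 2 the preimage p_n⁻¹(closed disk of radius R centered at 0) is contained in the closed disk of radius R centered at 0. -/
open Filter Polynomial

lemma msprod_low {s : Multiset ℝ} {c : ℝ} (hc : 0 ≤ c) (h : ∀ x ∈ s, c ≤ x) :
    c ^ Multiset.card s ≤ s.prod := by
  induction s using Multiset.induction with
  | empty => simp
  | cons a s ih =>
    simp only [Multiset.card_cons, Multiset.prod_cons, pow_succ]
    have hs : ∀ x ∈ s, c ≤ x := fun x hx => h x (Multiset.mem_cons_of_mem hx)
    have h0 : (0:ℝ) ≤ s.prod := Multiset.prod_nonneg fun x hx => le_trans hc (hs x hx)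
    calc c ^ Multiset.card s * c ≤ s.prod * a :=
          mul_le_mul (ih hs) (h a (Multiset.mem_cons_self a s)) hc h0
      _ = a * s.prod := mul_comm _ _

lemma msprod_high {s : Multiset ℝ} {c : ℝ} (h0 : ∀ x ∈ s, 0 ≤ x) (h : ∀ x ∈ s, x ≤ c) :
    s.prod ≤ c ^ Multiset.card s := by
  induction s using Multiset.induction with
  | empty => simp
  | cons a s ih =>
    simp only [Multiset.card_cons, Multiset.prod_cons, pow_succ]
    have hs0 : ∀ x ∈ s, (0:ℝ) ≤ x := fun x hx => h0 x (Multiset.mem_cons_of_mem hx)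
    have hs : ∀ x ∈ s, x ≤ c := fun x hx => h x (Multiset.mem_cons_of_mem hx)
    have hps : (0:ℝ) ≤ s.prod := Multiset.prod_nonneg hs0
    calc a * s.prod ≤ c * c ^ Multiset.card s := by
          apply mul_le_mul (h a (Multiset.mem_cons_self a s)) (ih hs0 hs) hps
          exact le_trans (h0 a (Multiset.mem_cons_self a s)) (h a (Multiset.mem_cons_self a s))
      _ = c ^ Multiset.card s * c := mul_comm _ _

lemma eval_factored (q : Polynomial ℂ) (z : ℂ) :
    ‖(q.eval z)‖
      = ‖q.leadingCoeff‖ * ((q.roots.map fun a => z - a).map (fun w : ℂ => ‖w‖)).prod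
    ∧ Multiset.card q.roots = q.natDegree := by
  have hsp : q.Splits := IsAlgClosed.splits q
  have hfac := hsp.eq_prod_roots
  constructor
  · conv_lhs => rw [hfac]
    rw [Polynomial.eval_mul, Polynomial.eval_C, Polynomial.eval_multiset_prod, Multiset.map_map,
      norm_mul]
    have := map_multiset_prod (normHom : ℂ →*₀ ℝ) (Multiset.map (eval z ∘ fun x => X - C x) q.roots)
    simpa [Multiset.map_map, Function.comp] using Or.inl this
  · exact (Polynomial.splits_iff_card_roots).mp hsp

lemma eval_low (q : Polynomial ℂ) (r : ℝ)
    (hroots : ∀ a ∈ q.roots, ‖a‖ ≤ r) (z : ℂ) (hz : r ≤ ‖z‖) :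
    ‖q.leadingCoeff‖ * (‖z‖ - r) ^ q.natDegree ≤ ‖(q.eval z)‖ := by
  obtain ⟨heq, hcard⟩ := eval_factored q z
  rw [heq]
  apply mul_le_mul_of_nonneg_left _ (norm_nonneg _)
  have hcard2 : Multiset.card ((q.roots.map fun a => z - a).map (fun w : ℂ => ‖w‖)) = q.natDegree := by
    rw [Multiset.card_map, Multiset.card_map, hcard]
  rw [← hcard2]
  apply msprod_low (by linarith)
  intro x hx
  rw [Multiset.mem_map] at hx
  obtain ⟨w, hw, rfl⟩ := hx
  rw [Multiset.mem_map] at hw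
  obtain ⟨a, ha, rfl⟩ := hw
  have h1 : ‖a‖ ≤ r := hroots a ha
  have h2 : ‖z‖ - ‖a‖ ≤ ‖(z - a)‖ := by
    have := norm_sub_norm_le z a
    simpa using this
  linarith

lemma eval_high (q : Polynomial ℂ) (r : ℝ)
    (hroots : ∀ a ∈ q.roots, ‖a‖ ≤ r) (z : ℂ) :
    ‖(q.eval z)‖ ≤ ‖q.leadingCoeff‖ * (‖z‖ + r) ^ q.natDegree := by
  obtain ⟨heq, hcard⟩ := eval_factored q z
  rw [heq]
  apply mul_le_mul_of_nonneg_left _ (norm_nonneg _)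
  have hcard2 : Multiset.card ((q.roots.map fun a => z - a).map (fun w : ℂ => ‖w‖)) = q.natDegree := by
    rw [Multiset.card_map, Multiset.card_map, hcard]
  rw [← hcard2]
  apply msprod_high (fun x hx => by
    rw [Multiset.mem_map] at hx
    obtain ⟨w, _, rfl⟩ := hx
    exact norm_nonneg _)
  intro x hx
  rw [Multiset.mem_map] at hx
  obtain ⟨w, hw, rfl⟩ := hx
  rw [Multiset.mem_map] at hw
  obtain ⟨a, ha, rfl⟩ := hw
  have h1 : ‖a‖ ≤ r := hroots a ha
  have h2 : ‖(z - a)‖ ≤ ‖z‖ + ‖a‖ := by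
    have := norm_sub_le z a
    simpa using this
  linarith

theorem guided_preimage_disk
    (p : ℕ → Polynomial ℂ)
    (hdeg1 : 1 ≤ (p 1).natDegree)
    (hdeg : ∀ n ≥ 2, 2 ≤ (p n).natDegree)
    (α : ℝ)
    (hα : α = Filter.limsup (fun n => (1 : ℝ) / ((p n).natDegree : ℝ)) Filter.atTop)
    (r : ℝ) (hr : 0 < r)
    (h : ℂ → ℝ)
    (hh : Filter.Tendsto (fun z : ℂ => h z - α * Real.log ‖z‖)
      (Filter.comap (fun z : ℂ => ‖z‖) Filter.atTop) Filter.atTop)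
    (hzeros : ∀ n ≥ 1, ∀ z : ℂ, (p n).eval z = 0 → ‖z‖ ≤ r)
    (hgrow : ∀ z : ℂ, r < ‖z‖ →
      ∃ U ∈ nhds z, ∃ N : ℕ, 1 < N ∧ ∀ n ≥ N, ∀ ζ ∈ U,
        h ζ < (1 / ((p n).natDegree : ℝ)) * max 0 (Real.log ‖(p n).eval ζ‖)) :
    ∃ ϱ : ℝ, 0 < ϱ ∧ ∀ R ≥ ϱ, ∀ n ≥ 2,
      (fun z : ℂ => (p n).eval z) ⁻¹' {z : ℂ | ‖z‖ ≤ R} ⊆ {z : ℂ | ‖z‖ ≤ R} := by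
  classical
  -- roots are in the disk of radius r
  have hroots : ∀ n ≥ 2, ∀ a ∈ (p n).roots, ‖a‖ ≤ r := by
    intro n hn a ha
    exact hzeros n (le_trans one_le_two hn) a ((Polynomial.mem_roots'.mp ha).2)
  -- α is nonnegative
  have hα0 : 0 ≤ α := by
    rw [hα]
    apply Filter.le_limsup_of_frequently_le
    · exact Filter.Frequently.of_forall (fun n => by positivity)
    · refine Filter.isBoundedUnder_of ⟨1, fun n => ?_⟩
      by_cases hd : (p n).natDegree = 0
      · simp [hd]
      · have h1 : (1:ℝ) ≤ ((p n).natDegree : ℝ) := by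
          exact_mod_cast Nat.one_le_iff_ne_zero.mpr hd
        rw [div_le_one (by linarith)]
        exact h1
  -- threshold from hh
  obtain ⟨A, hA⟩ : ∃ A : ℝ, ∀ z : ℂ, A ≤ ‖z‖ →
      0 ≤ h z - α * Real.log (‖z‖) := by
    have hev : ∀ᶠ z in Filter.comap (fun z : ℂ => ‖z‖) Filter.atTop,
        0 ≤ h z - α * Real.log (‖z‖) := hh.eventually_ge_atTop 0
    rw [Filter.eventually_comap, Filter.eventually_atTop] at hev
    obtain ⟨A, hA⟩ := hev
    exact ⟨A, fun z hz => hA (‖z‖) hz z rfl⟩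
  set ρ : ℝ := max A (r + 1) with hρdef
  have hρr : r < ρ := lt_of_lt_of_le (lt_add_one r) (le_max_right _ _)
  have hρ1 : 1 ≤ ρ := le_trans (by linarith) (le_max_right A (r + 1))
  have hρ0 : 0 < ρ := by linarith
  have hζabs : ‖((ρ : ℝ) : ℂ)‖ = ρ := by
    rw [Complex.norm_real, Real.norm_eq_abs, abs_of_pos hρ0]
  -- apply hgrow at the point ρ
  obtain ⟨U, hU, N, hN1, hN⟩ := hgrow ((ρ : ℝ) : ℂ) (by rw [hζabs]; exact hρr)
  have hζU : ((ρ : ℝ) : ℂ) ∈ U := mem_of_mem_nhds hU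
  have hhζ : 0 ≤ h ((ρ : ℝ) : ℂ) := by
    have h1 := hA ((ρ : ℝ) : ℂ) (by rw [hζabs]; exact le_max_left _ _)
    have h2 : 0 ≤ α * Real.log (‖((ρ : ℝ) : ℂ)‖) := by
      rw [hζabs]
      exact mul_nonneg hα0 (Real.log_nonneg hρ1)
    linarith
  -- for n ≥ N, |p n (ρ)| > 1
  have key : ∀ n, N ≤ n → 1 < ‖((p n).eval ((ρ : ℝ) : ℂ))‖ := by
    intro n hn
    have hn2 : 2 ≤ n := le_trans hN1 hn
    have hd : 2 ≤ (p n).natDegree := hdeg n hn2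
    have hdpos : (0:ℝ) < ((p n).natDegree : ℝ) := by
      have : 0 < (p n).natDegree := lt_of_lt_of_le two_pos hd
      exact_mod_cast this
    have hlt := hN n hn ((ρ : ℝ) : ℂ) hζU
    have hmax : 0 < max 0 (Real.log (‖((p n).eval ((ρ : ℝ) : ℂ))‖)) := by
      by_contra hc
      push_neg at hc
      have : (1 / ((p n).natDegree : ℝ)) *
          max 0 (Real.log (‖((p n).eval ((ρ : ℝ) : ℂ))‖)) ≤ 0 :=
        mul_nonpos_of_nonneg_of_nonpos (by positivity) hc
      linarith
    have hlog : 0 < Real.log (‖((p n).eval ((ρ : ℝ) : ℂ))‖) := by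
      rcases lt_max_iff.mp hmax with h' | h'
      · exact absurd h' (lt_irrefl 0)
      · exact h'
    by_contra hc
    push_neg at hc
    have : Real.log (‖((p n).eval ((ρ : ℝ) : ℂ))‖) ≤ 0 :=
      Real.log_nonpos (norm_nonneg _) hc
    linarith
  -- leading coefficient bound for n ≥ N
  have hlcN : ∀ n, N ≤ n →
      1 < ‖(p n).leadingCoeff‖ * (ρ + r) ^ (p n).natDegree := by
    intro n hn
    have hn2 : 2 ≤ n := le_trans hN1 hn
    have hub := eval_high (p n) r (hroots n hn2) ((ρ : ℝ) : ℂ)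
    rw [hζabs] at hub
    exact lt_of_lt_of_le (key n hn) hub
  -- leading coefficient bound for small n
  obtain ⟨c, hc0, hc1, hc⟩ : ∃ c : ℝ, 0 < c ∧ c ≤ 1 ∧
      ∀ n ∈ Finset.Ico 2 N, c ≤ ‖(p n).leadingCoeff‖ := by
    by_cases hne : (Finset.Ico 2 N).Nonempty
    · refine ⟨min 1 ((Finset.Ico 2 N).inf' hne fun n => ‖(p n).leadingCoeff‖),
        ?_, min_le_left _ _, fun n hn => le_trans (min_le_right _ _) (Finset.inf'_le _ hn)⟩
      apply lt_min one_pos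
      rw [Finset.lt_inf'_iff]
      intro n hn
      have hn2 : 2 ≤ n := (Finset.mem_Ico.mp hn).1
      have hp0 : p n ≠ 0 := by
        intro hzero
        have := hdeg n hn2
        rw [hzero] at this
        simp at this
      exact norm_pos_iff.mpr (Polynomial.leadingCoeff_ne_zero.mpr hp0)
    · exact ⟨1, one_pos, le_refl 1, fun n hn => (hne ⟨n, hn⟩).elim⟩
  set c' : ℝ := min c (((ρ + r) ^ 2)⁻¹) with hc'def
  have hc'0 : 0 < c' := lt_min hc0 (by positivity)
  set ϱ : ℝ := max (max (ρ + 2 * r + 1) (2 * r + 2)) (4 / c') with hϱdef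
  have hϱpos : 0 < ϱ := lt_of_lt_of_le (by linarith) (le_trans (le_max_left _ _) (le_max_left _ _))
  refine ⟨ϱ, hϱpos, ?_⟩
  intro R hR n hn z hz
  simp only [Set.mem_preimage, Set.mem_setOf_eq] at hz ⊢
  by_contra hzR
  push_neg at hzR
  have hzϱ : ϱ < ‖z‖ := lt_of_le_of_lt hR hzR
  have hz1 : ρ + 2 * r + 1 ≤ ‖z‖ :=
    le_of_lt (lt_of_le_of_lt (le_trans (le_max_left _ _) (le_max_left _ _)) hzϱ)
  have hz2 : 2 * r + 2 ≤ ‖z‖ :=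
    le_of_lt (lt_of_le_of_lt (le_trans (le_max_right _ _) (le_max_left _ _)) hzϱ)
  have hz3 : 4 / c' ≤ ‖z‖ := le_of_lt (lt_of_le_of_lt (le_max_right _ _) hzϱ)
  have hd2 : 2 ≤ (p n).natDegree := hdeg n hn
  have hzr : r ≤ ‖z‖ := by linarith
  set X : ℝ := ‖z‖ - r with hXdef
  have hX1 : 1 ≤ X := by simp only [hXdef]; linarith
  have hX2 : ρ + r ≤ X := by simp only [hXdef]; linarith
  -- main claim : |z| ≤ |p n z|
  have hmain : ‖z‖ ≤ ‖((p n).eval z)‖ := by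
    have hlow := eval_low (p n) r (hroots n hn) z hzr
    have hstep : c' * X ^ 2 ≤ ‖((p n).eval z)‖ := by
      rcases le_or_gt N n with hnN | hnN
      · -- large n : use hlcN
        have h1 := hlcN n hnN
        set Q : ℝ := X / (ρ + r) with hQdef
        have hρr0 : 0 < ρ + r := by linarith
        have hQ1 : 1 ≤ Q := (le_div_iff₀ hρr0).mpr (by linarith)
        have hXQ : X = (ρ + r) * Q := by rw [hQdef]; field_simp
        have hQd : Q ^ 2 ≤ Q ^ (p n).natDegree := pow_le_pow_right₀ hQ1 hd2
        have hchain : Q ^ (p n).natDegree ≤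
            ‖(p n).leadingCoeff‖ * X ^ (p n).natDegree := by
          rw [hXQ, mul_pow, ← mul_assoc]
          nlinarith [pow_nonneg (le_trans zero_le_one hQ1) (p n).natDegree]
        have hc'Q : c' * X ^ 2 ≤ Q ^ 2 := by
          have : c' ≤ ((ρ + r) ^ 2)⁻¹ := min_le_right _ _
          rw [hQdef, div_pow]
          rw [div_eq_mul_inv, mul_comm (X ^ 2)]
          apply mul_le_mul_of_nonneg_right this (by positivity) |>.trans_eq rfl
        calc c' * X ^ 2 ≤ Q ^ 2 := hc'Q
          _ ≤ Q ^ (p n).natDegree := hQd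
          _ ≤ ‖(p n).leadingCoeff‖ * X ^ (p n).natDegree := hchain
          _ ≤ ‖((p n).eval z)‖ := hlow
      · -- small n : use hc
        have hmem : n ∈ Finset.Ico 2 N := Finset.mem_Ico.mpr ⟨hn, hnN⟩
        have h1 := hc n hmem
        have hXd : X ^ 2 ≤ X ^ (p n).natDegree := pow_le_pow_right₀ hX1 hd2
        calc c' * X ^ 2 ≤ c * X ^ 2 :=
              mul_le_mul_of_nonneg_right (min_le_left _ _) (by positivity)
          _ ≤ ‖(p n).leadingCoeff‖ * X ^ (p n).natDegree := by
              nlinarith [pow_nonneg (le_trans zero_le_one hX1) (p n).natDegree]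
          _ ≤ ‖((p n).eval z)‖ := hlow
    have hfin : ‖z‖ ≤ c' * X ^ 2 := by
      have hXhalf : ‖z‖ / 2 ≤ X := by simp only [hXdef]; linarith
      have h4 : 4 ≤ c' * ‖z‖ := by
        rw [div_le_iff₀ hc'0] at hz3
        linarith
      have habs0 : (0:ℝ) ≤ ‖z‖ := norm_nonneg _
      have h5 : c' * (‖z‖ / 2) ^ 2 ≤ c' * X ^ 2 :=
        mul_le_mul_of_nonneg_left (pow_le_pow_left₀ (by positivity) hXhalf 2) hc'0.le
      have h6 : 4 * ‖z‖ ≤ c' * ‖z‖ * ‖z‖ :=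
        mul_le_mul_of_nonneg_right h4 habs0
      calc ‖z‖ = 4 * ‖z‖ / 4 := by ring
        _ ≤ c' * ‖z‖ * ‖z‖ / 4 := by linarith
        _ = c' * (‖z‖ / 2) ^ 2 := by ring
        _ ≤ c' * X ^ 2 := h5
    linarith
  linarith
end

section
/- Let (p_n)_{n≥1} be a sequence of polynomials over ℂ with deg p_1 ≥ 1 and deg p_n ≥ 2 for all n ≥ 2, and set α := limsup_{n→∞} 1/(deg p_n). The following conditions are equivalent: (i) (p_n) is guided, i.e. there exist r > 0 and h : ℂ → ℝ with h(z) − α·log|z| → ∞ as |z| → ∞ such that every zero of every p_n lies in the closed disk of radius r centered at 0, and there exists N > 1 such that for all n ≥ N and all ζ with |ζ| > r, (1/deg p_n)·log⁺|p_n(ζ)| > h(ζ); (ii) there exist r > 0 and h : ℂ → ℝ with h(z) − α·log|z| → ∞ as |z| → ∞ such that every zero of every p_n lies in the closed disk of radius r centered at 0, and for every z with |z| > r there exist a neighbourhood U of z and an integer N > 1 with (1/deg p_n)·log⁺|p_n(ζ)| > h(ζ) for all n ≥ N and all ζ ∈ U; (iii) there exists R > 1 such that for every n ≥ 2, p_n⁻¹({z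 : |z| ≤ R}) ⊆ {z : |z| ≤ R}. -/
open Filter Polynomial

-- multiset prod bounds for ℝ
lemma mset_pow_le_prod (s : Multiset ℝ) (c : ℝ) (hc : 0 ≤ c) (h : ∀ x ∈ s, c ≤ x) :
    c ^ Multiset.card s ≤ s.prod := by
  induction s using Multiset.induction with
  | empty => simp
  | cons a s ih =>
    simp only [Multiset.card_cons, Multiset.prod_cons, pow_succ]
    rw [mul_comm]
    exact mul_le_mul (h a (Multiset.mem_cons_self a s))
      (ih (fun x hx => h x (Multiset.mem_cons_of_mem hx)))
      (pow_nonneg hc _) ((hc.trans (h a (Multiset.mem_cons_self a s))).trans (le_refl _))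

lemma mset_prod_le_pow (s : Multiset ℝ) (c : ℝ) (h0 : ∀ x ∈ s, 0 ≤ x)
    (h : ∀ x ∈ s, x ≤ c) : s.prod ≤ c ^ Multiset.card s := by
  induction s using Multiset.induction with
  | empty => simp
  | cons a s ih =>
    simp only [Multiset.card_cons, Multiset.prod_cons, pow_succ]
    rw [mul_comm (c ^ _) c]
    exact mul_le_mul (h a (Multiset.mem_cons_self a s))
      (ih (fun x hx => h0 x (Multiset.mem_cons_of_mem hx)) (fun x hx => h x (Multiset.mem_cons_of_mem hx)))
      (Multiset.prod_nonneg (fun x hx => h0 x (Multiset.mem_cons_of_mem hx)))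
      ((h0 a (Multiset.mem_cons_self a s)).trans (h a (Multiset.mem_cons_self a s)))

lemma abs_eval_factored (q : Polynomial ℂ) (hq : q ≠ 0) (z : ℂ) :
    ‖q.eval z‖ =
      ‖q.leadingCoeff‖ * ((q.roots.map (fun a => ‖z - a‖)).prod) ∧
      Multiset.card q.roots = q.natDegree := by
  have hcard : Multiset.card q.roots = q.natDegree :=
    (Polynomial.splits_iff_card_roots.mp (IsAlgClosed.splits q))
  constructor
  · conv_lhs => rw [← Polynomial.C_leadingCoeff_mul_prod_multiset_X_sub_C hcard]
    rw [Polynomial.eval_mul, Polynomial.eval_C, norm_mul]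
    congr 1
    rw [Polynomial.eval_multiset_prod, (map_multiset_prod (normHom.toMonoidHom : ℂ →* ℝ) _ : ‖_‖ = _)]
    congr 1
    simp [Multiset.map_map, Function.comp_def]
  · exact hcard

lemma eval_lower_bound (q : Polynomial ℂ) (hq : q ≠ 0) (r : ℝ)
    (hr : ∀ a : ℂ, q.eval a = 0 → ‖a‖ ≤ r) (z : ℂ) (hz : r ≤ ‖z‖) :
    ‖q.leadingCoeff‖ * (‖z‖ - r) ^ q.natDegree ≤ ‖q.eval z‖ := by
  obtain ⟨heq, hcard⟩ := abs_eval_factored q hq z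
  rw [heq, ← hcard]
  refine mul_le_mul_of_nonneg_left ?_ (norm_nonneg _)
  rw [← Multiset.card_map (fun a => ‖z - a‖) q.roots]
  apply mset_pow_le_prod _ _ (by linarith)
  intro x hx
  obtain ⟨a, ha, rfl⟩ := Multiset.mem_map.mp hx
  have ha' : ‖a‖ ≤ r := hr a ((Polynomial.mem_roots hq).mp ha)
  have h2 := norm_sub_norm_le z a
  linarith

lemma eval_upper_bound (q : Polynomial ℂ) (hq : q ≠ 0) (r : ℝ) (hr0 : 0 ≤ r)
    (hr : ∀ a : ℂ, q.eval a = 0 → ‖a‖ ≤ r) (w : ℂ) :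
    ‖q.eval w‖ ≤ ‖q.leadingCoeff‖ * (‖w‖ + r) ^ q.natDegree := by
  obtain ⟨heq, hcard⟩ := abs_eval_factored q hq w
  rw [heq, ← hcard]
  refine mul_le_mul_of_nonneg_left ?_ (norm_nonneg _)
  rw [← Multiset.card_map (fun a => ‖w - a‖) q.roots]
  apply mset_prod_le_pow
  · intro x hx; obtain ⟨a, ha, rfl⟩ := Multiset.mem_map.mp hx; exact norm_nonneg _
  · intro x hx
    obtain ⟨a, ha, rfl⟩ := Multiset.mem_map.mp hx
    have ha' : ‖a‖ ≤ r := hr a ((Polynomial.mem_roots hq).mp ha)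
    calc ‖w - a‖ ≤ ‖w‖ + ‖a‖ := by
          simpa [sub_eq_add_neg] using norm_add_le w (-a)
      _ ≤ ‖w‖ + r := by linarith

lemma poly_growth (q : Polynomial ℂ) (hd : 2 ≤ q.natDegree) (r : ℝ) (hr0 : 0 ≤ r)
    (hr : ∀ a : ℂ, q.eval a = 0 → ‖a‖ ≤ r) :
    ∃ C : ℝ, ∀ z : ℂ, C ≤ ‖z‖ → ‖z‖ ≤ ‖q.eval z‖ := by
  have hq : q ≠ 0 := fun h => by simp [h] at hd
  set a := ‖q.leadingCoeff‖ with ha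
  have ha0 : 0 < a := by
    simpa [ha] using (norm_pos_iff.mpr (Polynomial.leadingCoeff_ne_zero.mpr hq))
  refine ⟨max (max (2*r) (4/a)) (r+1), fun z hz => ?_⟩
  set t := ‖z‖ with ht
  have h1 : r + 1 ≤ t := le_trans (le_max_right _ _) hz
  have h2 : 2*r ≤ t := le_trans ((le_max_left _ _).trans (le_max_left _ _)) hz
  have h3 : 4/a ≤ t := le_trans ((le_max_right _ _).trans (le_max_left _ _)) hz
  have hL := eval_lower_bound q hq r hr z (by linarith)
  have hpow : (t - r) ^ 2 ≤ (t - r) ^ q.natDegree :=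
    pow_le_pow_right₀ (by linarith) hd
  have key : t ≤ a * (t - r) ^ 2 := by
    have htr : t/2 ≤ t - r := by linarith
    have h3' : 4 ≤ t * a := by rw [div_le_iff₀ ha0] at h3; linarith
    have hsq : (t/2)*(t/2) ≤ (t-r)*(t-r) := mul_self_le_mul_self (by linarith) htr
    have hmid : t ≤ a * ((t/2)*(t/2)) := by
      nlinarith [mul_le_mul_of_nonneg_left h3' (by linarith : (0:ℝ) ≤ t)]
    calc t ≤ a * ((t/2)*(t/2)) := hmid
      _ ≤ a * ((t-r)*(t-r)) := mul_le_mul_of_nonneg_left hsq ha0.le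
      _ = a * (t - r)^2 := by ring
  calc t ≤ a * (t-r)^2 := key
    _ ≤ a * (t-r)^q.natDegree := mul_le_mul_of_nonneg_left hpow ha0.le
    _ ≤ ‖q.eval z‖ := hL

lemma alpha_bounds (p : ℕ → Polynomial ℂ)
    (hdeg : ∀ n ≥ 2, 2 ≤ (p n).natDegree) (α : ℝ)
    (hα : α = Filter.limsup (fun n => (1 : ℝ) / ((p n).natDegree : ℝ)) Filter.atTop) :
    0 ≤ α ∧ α ≤ 1/2 := by
  set u : ℕ → ℝ := fun n => (1 : ℝ) / ((p n).natDegree : ℝ) with hu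
  have hnn : ∀ n, 0 ≤ u n := fun n => by positivity
  have hub : ∀ n, u n ≤ 1 := by
    intro n
    rcases Nat.eq_zero_or_pos (p n).natDegree with h | h
    · simp [hu, h]
    · rw [hu]; rw [div_le_one (by exact_mod_cast h)]; exact_mod_cast h
  have hbddAbove : Filter.IsBoundedUnder (· ≤ ·) Filter.atTop u :=
    Filter.isBoundedUnder_of ⟨1, hub⟩
  have hbddBelow : Filter.IsBoundedUnder (· ≥ ·) Filter.atTop u :=
    Filter.isBoundedUnder_of ⟨0, hnn⟩
  constructor
  · rw [hα]
    exact Filter.le_limsup_of_frequently_le (Filter.Frequently.of_forall hnn) hbddAbove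
  · rw [hα]
    refine Filter.limsup_le_of_le hbddBelow.isCoboundedUnder_le ?_
    filter_upwards [Filter.eventually_ge_atTop 2] with n hn
    have h2 : 2 ≤ (p n).natDegree := hdeg n hn
    rw [hu]
    have hc : (2:ℝ) ≤ ((p n).natDegree : ℝ) := by exact_mod_cast h2
    rw [div_le_div_iff₀ (by linarith) (by norm_num)]
    linarith

-- root modulus bound for a single nonzero polynomial
lemma roots_bounded (q : Polynomial ℂ) (hq : q ≠ 0) :
    ∃ r₁ : ℝ, 0 ≤ r₁ ∧ ∀ z : ℂ, q.eval z = 0 → ‖z‖ ≤ r₁ := by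
  refine ⟨((q.roots).map (fun z : ℂ => ‖z‖)).foldr max 0, ?_, ?_⟩
  · induction (q.roots).map (fun z : ℂ => ‖z‖) using Multiset.induction with
    | empty => simp
    | cons a s ih => simp only [Multiset.foldr_cons]; exact le_max_of_le_right ih
  · intro z hz
    have hmem : z ∈ q.roots := (Polynomial.mem_roots hq).mpr hz
    have hmem' : ‖z‖ ∈ (q.roots).map (fun z : ℂ => ‖z‖) := Multiset.mem_map_of_mem _ hmem
    revert hmem'
    generalize (q.roots).map (fun z : ℂ => ‖z‖) = s
    induction s using Multiset.induction with
    | empty => simp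
    | cons a s ih =>
      intro hm
      rw [Multiset.mem_cons] at hm
      simp only [Multiset.foldr_cons]
      rcases hm with rfl | hm
      · exact le_max_left _ _
      · exact le_max_of_le_right (ih hm)
lemma dir31 (p : ℕ → Polynomial ℂ)
    (hdeg1 : 1 ≤ (p 1).natDegree)
    (hdeg : ∀ n ≥ 2, 2 ≤ (p n).natDegree)
    (α : ℝ) (hα0 : 0 ≤ α) (hα2 : α ≤ 1/2)
    (H : ∃ R : ℝ, 1 < R ∧ ∀ n ≥ 2,
      (fun z : ℂ => (p n).eval z) ⁻¹' {z : ℂ | ‖z‖ ≤ R}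
        ⊆ {z : ℂ | ‖z‖ ≤ R}) :
    (∃ r : ℝ, 0 < r ∧ ∃ h : ℂ → ℝ,
      Filter.Tendsto (fun z : ℂ => h z - α * Real.log (‖z‖))
        (Filter.comap (fun z : ℂ => ‖z‖) Filter.atTop) Filter.atTop ∧
      (∀ n ≥ 1, ∀ z : ℂ, (p n).eval z = 0 → ‖z‖ ≤ r) ∧
      (∃ N : ℕ, 1 < N ∧ ∀ n ≥ N, ∀ ζ : ℂ, r < ‖ζ‖ →
        h ζ < (1 / ((p n).natDegree : ℝ)) *
          max 0 (Real.log (‖(p n).eval ζ‖)))) := by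
  obtain ⟨R, hR1, hinv⟩ := H
  have hp1 : p 1 ≠ 0 := fun h => by simp [h] at hdeg1
  obtain ⟨r₁, hr₁0, hr₁⟩ := roots_bounded (p 1) hp1
  set r : ℝ := max r₁ (2*R) with hrdef
  have hr0 : 0 < r := lt_of_lt_of_le (by linarith) (le_max_right _ _)
  have hrR : 2*R ≤ r := le_max_right _ _
  -- roots of p n for n ≥ 2 are within R
  have hrootsR : ∀ n, 2 ≤ n → ∀ z : ℂ, (p n).eval z = 0 → ‖z‖ ≤ R := by
    intro n hn z hz
    have : z ∈ (fun z : ℂ => (p n).eval z) ⁻¹' {z : ℂ | ‖z‖ ≤ R} := by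
      simp [Set.mem_preimage, hz]; positivity
    exact hinv n hn this
  refine ⟨r, hr0, fun z => Real.log (‖z‖ - R) - Real.log (3*R) - 1, ?_, ?_, ?_⟩
  · -- tendsto
    rw [Filter.tendsto_atTop]
    intro b
    rw [Filter.eventually_comap, Filter.eventually_atTop]
    refine ⟨max (max 1 (2*R)) (Real.exp (2*(b + Real.log 2 + Real.log (3*R) + 1))), ?_⟩
    intro x hx z hzx
    have h1 : 1 ≤ x := le_trans (le_trans (le_max_left _ _) (le_max_left _ _)) hx
    have h2 : 2*R ≤ x := le_trans (le_trans (le_max_right _ _) (le_max_left _ _)) hx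
    have h3 : Real.exp (2*(b + Real.log 2 + Real.log (3*R) + 1)) ≤ x :=
      le_trans (le_max_right _ _) hx
    have hlogx : 2*(b + Real.log 2 + Real.log (3*R) + 1) ≤ Real.log x :=
      (Real.le_log_iff_exp_le (by linarith)).mpr h3
    have hlogx0 : 0 ≤ Real.log x := Real.log_nonneg h1
    have hxR : x/2 ≤ x - R := by linarith
    have hlog2 : Real.log (x/2) ≤ Real.log (x - R) :=
      Real.log_le_log (by linarith) hxR
    have hdivlog : Real.log (x/2) = Real.log x - Real.log 2 :=
      Real.log_div (by linarith) (by norm_num)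
    have hαlog : α * Real.log x ≤ (1/2) * Real.log x :=
      mul_le_mul_of_nonneg_right hα2 hlogx0
    show b ≤ Real.log (‖z‖ - R) - Real.log (3*R) - 1 - α * Real.log (‖z‖)
    rw [hzx]
    rw [hdivlog] at hlog2
    linarith
  · -- roots bound
    intro n hn z hz
    rcases eq_or_lt_of_le hn with h1 | h2
    · exact le_trans (hr₁ z (by rw [← h1] at hz; exact hz)) (le_max_left _ _)
    · exact le_trans (hrootsR n h2 z hz) (by linarith)
  · -- domination
    refine ⟨2, one_lt_two, ?_⟩
    intro n hn ζ hζ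
    set q := p n with hqdef
    have hd2 : 2 ≤ q.natDegree := hdeg n hn
    have hq : q ≠ 0 := fun h => by simp [h] at hd2
    set d := q.natDegree with hddef
    have hdR : (2:ℝ) ≤ (d:ℝ) := by exact_mod_cast hd2
    set A := ‖q.leadingCoeff‖ with hAdef
    have hA0 : 0 < A := norm_pos_iff.mpr (Polynomial.leadingCoeff_ne_zero.mpr hq)
    -- leading coefficient lower bound, from ζ₀ = 2R
    have hζ₀abs : ‖((2*R : ℝ) : ℂ)‖ = 2*R := by
      rw [Complex.norm_real, Real.norm_eq_abs]; exact abs_of_pos (by linarith)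
    have hbig : R < ‖q.eval ((2*R : ℝ) : ℂ)‖ := by
      by_contra hle
      push_neg at hle
      have : ((2*R : ℝ) : ℂ) ∈ (fun z : ℂ => q.eval z) ⁻¹' {z : ℂ | ‖z‖ ≤ R} := hle
      have := hinv n hn this
      rw [Set.mem_setOf_eq, hζ₀abs] at this
      linarith
    have hub := eval_upper_bound q hq R (by linarith) (hrootsR n hn) ((2*R : ℝ) : ℂ)
    rw [hζ₀abs] at hub
    -- log A > -(d : ℝ) * log (3R)
    have hlogub : Real.log (‖q.eval ((2*R:ℝ):ℂ)‖)
        ≤ Real.log A + (d:ℝ) * Real.log (3*R) := by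
      calc Real.log (‖q.eval ((2*R:ℝ):ℂ)‖) ≤ Real.log (A * (2*R + R)^d) :=
            Real.log_le_log (by linarith) hub
        _ = Real.log A + (d:ℝ) * Real.log (3*R) := by
            rw [Real.log_mul (ne_of_gt hA0) (pow_ne_zero _ (by intro hc; nlinarith)), Real.log_pow]
            ring_nf
    have hlogR : 0 < Real.log R := Real.log_pos hR1
    have hlogA : -( (d:ℝ) * Real.log (3*R)) < Real.log A := by
      have := Real.log_le_log (by linarith : (0:ℝ) < R) hbig.le
      nlinarith [Real.log_lt_log (by linarith : (0:ℝ) < R) hbig]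
    -- lower bound at ζ
    have htR : 2*R < ‖ζ‖ := lt_of_le_of_lt hrR hζ
    have hlb := eval_lower_bound q hq R (hrootsR n hn) ζ (by linarith)
    have hevalpos : 0 < ‖q.eval ζ‖ := by
      have : 0 < A * (‖ζ‖ - R)^d := mul_pos hA0 (pow_pos (by linarith) _)
      linarith
    have hloglb : Real.log A + (d:ℝ) * Real.log (‖ζ‖ - R)
        ≤ Real.log (‖q.eval ζ‖) := by
      calc Real.log A + (d:ℝ) * Real.log (‖ζ‖ - R)
          = Real.log (A * (‖ζ‖ - R)^d) := by
            rw [Real.log_mul (ne_of_gt hA0)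
              (pow_ne_zero _ (by intro hc; nlinarith)), Real.log_pow]
      _ ≤ Real.log (‖q.eval ζ‖) :=
            Real.log_le_log (mul_pos hA0 (pow_pos (by linarith) _)) hlb
    -- conclude
    have hkey : (d:ℝ) * (Real.log (‖ζ‖ - R) - Real.log (3*R) - 1)
        < Real.log (‖q.eval ζ‖) := by nlinarith
    have hd0 : (0:ℝ) < (d:ℝ) := by linarith
    have h1d : Real.log (‖ζ‖ - R) - Real.log (3*R) - 1
        < (1/(d:ℝ)) * Real.log (‖q.eval ζ‖) := by
      rw [div_mul_eq_mul_div, lt_div_iff₀ hd0, one_mul] at *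
      calc (Real.log (‖ζ‖ - R) - Real.log (3*R) - 1) * (d:ℝ)
          = (d:ℝ) * (Real.log (‖ζ‖ - R) - Real.log (3*R) - 1) := by ring
        _ < Real.log (‖q.eval ζ‖) := hkey
    exact lt_of_lt_of_le h1d (by
      refine mul_le_mul_of_nonneg_left (le_max_right _ _) (by positivity))
lemma dir23 (p : ℕ → Polynomial ℂ)
    (hdeg : ∀ n ≥ 2, 2 ≤ (p n).natDegree)
    (α : ℝ) (hα0 : 0 ≤ α)
    (H : ∃ r : ℝ, 0 < r ∧ ∃ h : ℂ → ℝ,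
      Filter.Tendsto (fun z : ℂ => h z - α * Real.log (‖z‖))
        (Filter.comap (fun z : ℂ => ‖z‖) Filter.atTop) Filter.atTop ∧
      (∀ n ≥ 1, ∀ z : ℂ, (p n).eval z = 0 → ‖z‖ ≤ r) ∧
      (∀ z : ℂ, r < ‖z‖ →
        ∃ U ∈ nhds z, ∃ N : ℕ, 1 < N ∧ ∀ n ≥ N, ∀ ζ ∈ U,
          h ζ < (1 / ((p n).natDegree : ℝ)) *
            max 0 (Real.log (‖(p n).eval ζ‖)))) :
    (∃ R : ℝ, 1 < R ∧ ∀ n ≥ 2,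
      (fun z : ℂ => (p n).eval z) ⁻¹' {z : ℂ | ‖z‖ ≤ R}
        ⊆ {z : ℂ | ‖z‖ ≤ R}) := by
  obtain ⟨r, hr0, h, hten, hroots, hloc⟩ := H
  -- radius ρ where h ≥ 1 on the circle
  have hev := (Filter.tendsto_atTop.mp hten) 1
  rw [Filter.eventually_comap, Filter.eventually_atTop] at hev
  obtain ⟨t₀, ht₀⟩ := hev
  set ρ : ℝ := max t₀ (max (r+1) 1) with hρdef
  have hρr : r < ρ := lt_of_lt_of_le (by linarith) ((le_max_left _ _).trans (le_max_right _ _))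
  have hρ1 : 1 ≤ ρ := (le_max_right _ _).trans (le_max_right _ _)
  have hcirc : ∀ w : ℂ, ‖w‖ = ρ → 1 ≤ h w := by
    intro w hw
    have h1 : 1 ≤ h w - α * Real.log (‖w‖) :=
      ht₀ (‖w‖) (by rw [hw]; exact le_max_left _ _) w rfl
    have h2 : 0 ≤ α * Real.log (‖w‖) := by
      apply mul_nonneg hα0
      rw [hw]; exact Real.log_nonneg hρ1
    linarith
  -- compactness of the circle
  set S : Set ℂ := Metric.sphere (0:ℂ) ρ with hSdef
  have hSabs : ∀ w : ℂ, w ∈ S → ‖w‖ = ρ := by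
    intro w hw
    rw [hSdef, Metric.mem_sphere, Complex.dist_eq, sub_zero] at hw
    exact hw
  have key : ∀ w : ℂ, w ∈ S → ∃ U, U ∈ nhds w ∧ ∃ N : ℕ, 1 < N ∧ ∀ n ≥ N, ∀ ζ ∈ U,
      h ζ < (1 / ((p n).natDegree : ℝ)) * max 0 (Real.log (‖(p n).eval ζ‖)) := by
    intro w hw
    obtain ⟨U, hU, rest⟩ := hloc w (by rw [hSabs w hw]; exact hρr)
    exact ⟨U, hU, rest⟩
  choose U hU N hN1 hdom using key
  obtain ⟨T, hT⟩ := (isCompact_sphere (0:ℂ) ρ).elim_nhds_subcover' U hU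
  set N₀ : ℕ := max 2 (T.sup fun x => N x.1 x.2) with hN₀def
  have hN₀2 : 2 ≤ N₀ := le_max_left _ _
  -- uniform domination on the circle for n ≥ N₀
  have dom0 : ∀ n, N₀ ≤ n → ∀ w : ℂ, ‖w‖ = ρ →
      ((p n).natDegree : ℝ) * h w < Real.log (‖(p n).eval w‖) := by
    intro n hn w hw
    have hwS : w ∈ S := by
      rw [hSdef, Metric.mem_sphere, Complex.dist_eq, sub_zero]; exact hw
    obtain ⟨x, hxT, hwU⟩ := Set.mem_iUnion₂.mp (hT hwS)
    have hNx : N x.1 x.2 ≤ N₀ := le_trans (Finset.le_sup (f := fun x => N x.1 x.2) hxT) (le_max_right _ _)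
    have hd := hdom x.1 x.2 n (le_trans hNx hn) w hwU
    have hd2 : 2 ≤ (p n).natDegree := hdeg n (le_trans hN₀2 hn)
    have hdR : (2:ℝ) ≤ ((p n).natDegree : ℝ) := by exact_mod_cast hd2
    have hhw : 1 ≤ h w := hcirc w hw
    have hd0 : (0:ℝ) < ((p n).natDegree : ℝ) := by linarith
    -- from h w < (1/d) * max, get d * h w < max
    have hmax : ((p n).natDegree : ℝ) * h w
        < max 0 (Real.log (‖(p n).eval w‖)) := by
      rw [one_div, inv_mul_eq_div, lt_div_iff₀ hd0] at hd
      linarith [hd]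
    have hmaxpos : (0:ℝ) < ((p n).natDegree : ℝ) * h w := by nlinarith
    rcases le_or_gt (Real.log (‖(p n).eval w‖)) 0 with hc | hc
    · rw [max_eq_left hc] at hmax; linarith
    · rwa [max_eq_right hc.le] at hmax
  -- constants for small n
  have hsm : ∀ n : ℕ, 2 ≤ n → ∃ C : ℝ, ∀ z : ℂ,
      C ≤ ‖z‖ → ‖z‖ ≤ ‖(p n).eval z‖ := by
    intro n hn
    exact poly_growth (p n) (hdeg n hn) r hr0.le (hroots n (by omega))
  choose! C hC using hsm
  have hTne : (Finset.range N₀).Nonempty := ⟨0, Finset.mem_range.mpr (by omega)⟩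
  set Cm : ℝ := (Finset.range N₀).sup' hTne C with hCmdef
  -- the big radius
  set R : ℝ := max (max Cm 2) (max (2*r + 2) ((2*(ρ+r))^2)) with hRdef
  have hR2 : 2 ≤ R := (le_max_right _ _).trans (le_max_left _ _)
  have hRr : 2*r + 2 ≤ R := (le_max_left _ _).trans (le_max_right _ _)
  have hRsq : (2*(ρ+r))^2 ≤ R := (le_max_right _ _).trans (le_max_right _ _)
  have hCmR : Cm ≤ R := (le_max_left _ _).trans (le_max_left _ _)
  refine ⟨R, by linarith, ?_⟩
  intro n hn z hz
  simp only [Set.mem_preimage, Set.mem_setOf_eq] at hz ⊢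
  by_contra hgt
  push_neg at hgt
  rcases lt_or_ge n N₀ with hnN | hnN
  · -- small n
    have hCn : C n ≤ Cm := Finset.le_sup' C (Finset.mem_range.mpr hnN)
    have := hC n hn z (by linarith)
    linarith
  · -- large n: use the circle estimate
    set q := p n with hqdef
    have hd2 : 2 ≤ q.natDegree := hdeg n hn
    have hq : q ≠ 0 := fun hc => by simp [hc] at hd2
    set d := q.natDegree with hddef
    have hdR : (2:ℝ) ≤ (d:ℝ) := by exact_mod_cast hd2
    have hd0 : (0:ℝ) < (d:ℝ) := by linarith
    set A := ‖q.leadingCoeff‖ with hAdef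
    have hA0 : 0 < A := norm_pos_iff.mpr (Polynomial.leadingCoeff_ne_zero.mpr hq)
    have hrootsn : ∀ a : ℂ, q.eval a = 0 → ‖a‖ ≤ r := hroots n (by omega)
    -- circle point w₀ = ρ
    have hw₀abs : ‖((ρ:ℝ) : ℂ)‖ = ρ := by
      rw [Complex.norm_real, Real.norm_eq_abs]; exact abs_of_pos (by linarith)
    have hcirc_dom := dom0 n hnN ((ρ:ℝ):ℂ) hw₀abs
    have hhw₀ : 1 ≤ h ((ρ:ℝ):ℂ) := hcirc _ hw₀abs
    have hub := eval_upper_bound q hq r hr0.le hrootsn ((ρ:ℝ):ℂ)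
    rw [hw₀abs] at hub
    have hρr0 : (0:ℝ) < ρ + r := by linarith
    have hlogub : Real.log (‖q.eval ((ρ:ℝ):ℂ)‖)
        ≤ Real.log A + (d:ℝ) * Real.log (ρ + r) := by
      calc Real.log (‖q.eval ((ρ:ℝ):ℂ)‖) ≤ Real.log (A * (ρ + r)^d) :=
            Real.log_le_log (by
              have h1 : (d:ℝ) * h ((ρ:ℝ):ℂ) ≤ Real.log (‖q.eval ((ρ:ℝ):ℂ)‖) :=
                hcirc_dom.le
              have h2 : (0:ℝ) < (d:ℝ) * h ((ρ:ℝ):ℂ) := by nlinarith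
              have := Real.exp_log_eq_abs (x := ‖q.eval ((ρ:ℝ):ℂ)‖)
              -- positivity of abs eval: if it were 0, log = 0, contradiction with h2 ≤ h1
              by_contra hc
              push_neg at hc
              have : ‖q.eval ((ρ:ℝ):ℂ)‖ = 0 := le_antisymm hc (norm_nonneg _)
              rw [this, Real.log_zero] at h1
              linarith) hub
        _ = Real.log A + (d:ℝ) * Real.log (ρ + r) := by
            rw [Real.log_mul (ne_of_gt hA0) (pow_ne_zero _ (ne_of_gt hρr0)), Real.log_pow]
    have hdh : (d:ℝ) * 1 ≤ (d:ℝ) * h ((ρ:ℝ):ℂ) := mul_le_mul_of_nonneg_left hhw₀ hd0.le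
    have hlogA : (d:ℝ) * (1 - Real.log (ρ + r)) < Real.log A := by
      have e2 : (d:ℝ)*(1 - Real.log (ρ+r)) = (d:ℝ)*1 - (d:ℝ)*Real.log (ρ+r) := by ring
      linarith [hcirc_dom, hlogub]
    -- at z : |z| > R
    have htz : R < ‖z‖ := hgt
    have hlb := eval_lower_bound q hq r hrootsn z (by linarith)
    have hzr1 : 1 ≤ ‖z‖ - r := by linarith
    have hloglb : Real.log A + (d:ℝ) * Real.log (‖z‖ - r)
        ≤ Real.log (‖q.eval z‖) := by
      calc Real.log A + (d:ℝ) * Real.log (‖z‖ - r)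
          = Real.log (A * (‖z‖ - r)^d) := by
            rw [Real.log_mul (ne_of_gt hA0) (pow_ne_zero _ (by linarith)), Real.log_pow]
      _ ≤ Real.log (‖q.eval z‖) :=
            Real.log_le_log (mul_pos hA0 (pow_pos (by linarith) _)) hlb
    -- key estimate on E := 1 + log(|z|-r) - log(ρ+r)
    have hElb : Real.log R - Real.log 2 ≤ Real.log (‖z‖ - r) := by
      have h1 : R/2 ≤ ‖z‖ - r := by linarith
      have h2 : Real.log (R/2) ≤ Real.log (‖z‖ - r) :=
        Real.log_le_log (by linarith) h1
      rwa [Real.log_div (by linarith) (by norm_num)] at h2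
    have hlogRsq : 2 * Real.log (2*(ρ+r)) ≤ Real.log R := by
      have h1 : Real.log ((2*(ρ+r))^2) ≤ Real.log R :=
        Real.log_le_log (by positivity) hRsq
      rwa [Real.log_pow, Nat.cast_ofNat] at h1
    have hlog2ρr : Real.log (2*(ρ+r)) = Real.log 2 + Real.log (ρ+r) :=
      Real.log_mul (by norm_num) (ne_of_gt hρr0)
    have hlogR0 : 0 < Real.log R := Real.log_pos (by linarith)
    have hE : Real.log R / 2 ≤ 1 + Real.log (‖z‖ - r) - Real.log (ρ + r) := by
      rw [hlog2ρr] at hlogRsq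
      linarith
    -- conclude log |q(z)| > log R
    have hfinal : Real.log R < Real.log (‖q.eval z‖) := by
      have hEpos : 0 < 1 + Real.log (‖z‖ - r) - Real.log (ρ + r) := by linarith
      have h2E : 2 * (1 + Real.log (‖z‖ - r) - Real.log (ρ + r))
          ≤ (d:ℝ) * (1 + Real.log (‖z‖ - r) - Real.log (ρ + r)) :=
        mul_le_mul_of_nonneg_right hdR hEpos.le
      have e1 : (d:ℝ) * (1 + Real.log (‖z‖ - r) - Real.log (ρ + r))
          = (d:ℝ)*(1 - Real.log (ρ+r)) + (d:ℝ)*Real.log (‖z‖ - r) := by ring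
      linarith [hE, h2E, hlogA, hloglb]
    have : R < ‖q.eval z‖ := by
      have hqz0 : 0 < ‖q.eval z‖ := by
        have : 0 < A * (‖z‖ - r)^d := mul_pos hA0 (pow_pos (by linarith) _)
        linarith
      exact (Real.log_lt_log_iff (by linarith) hqz0).mp hfinal
    linarith

theorem guided_sequence_characterization
    (p : ℕ → Polynomial ℂ)
    (hdeg1 : 1 ≤ (p 1).natDegree)
    (hdeg : ∀ n ≥ 2, 2 ≤ (p n).natDegree)
    (α : ℝ)
    (hα : α = Filter.limsup (fun n => (1 : ℝ) / ((p n).natDegree : ℝ)) Filter.atTop) :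
    List.TFAE
      [ -- (i) (p_n) is guided
        (∃ r : ℝ, 0 < r ∧ ∃ h : ℂ → ℝ,
          Filter.Tendsto (fun z : ℂ => h z - α * Real.log (‖z‖))
            (Filter.comap (fun z : ℂ => ‖z‖) Filter.atTop) Filter.atTop ∧
          (∀ n ≥ 1, ∀ z : ℂ, (p n).eval z = 0 → ‖z‖ ≤ r) ∧
          (∃ N : ℕ, 1 < N ∧ ∀ n ≥ N, ∀ ζ : ℂ, r < ‖ζ‖ →
            h ζ < (1 / ((p n).natDegree : ℝ)) *
              max 0 (Real.log (‖(p n).eval ζ‖)))),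
        -- (ii) assumptions of the key lemma
        (∃ r : ℝ, 0 < r ∧ ∃ h : ℂ → ℝ,
          Filter.Tendsto (fun z : ℂ => h z - α * Real.log (‖z‖))
            (Filter.comap (fun z : ℂ => ‖z‖) Filter.atTop) Filter.atTop ∧
          (∀ n ≥ 1, ∀ z : ℂ, (p n).eval z = 0 → ‖z‖ ≤ r) ∧
          (∀ z : ℂ, r < ‖z‖ →
            ∃ U ∈ nhds z, ∃ N : ℕ, 1 < N ∧ ∀ n ≥ N, ∀ ζ ∈ U,
              h ζ < (1 / ((p n).natDegree : ℝ)) *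
                max 0 (Real.log (‖(p n).eval ζ‖)))),
        -- (iii) invariance of a large disk
        (∃ R : ℝ, 1 < R ∧ ∀ n ≥ 2,
          (fun z : ℂ => (p n).eval z) ⁻¹' {z : ℂ | ‖z‖ ≤ R}
            ⊆ {z : ℂ | ‖z‖ ≤ R}) ] := by
  obtain ⟨hα0, hα2⟩ := alpha_bounds p hdeg α hα
  tfae_have 1 → 2 := by
    rintro ⟨r, hr0, h, hten, hroots, N, hN1, hdom⟩
    refine ⟨r, hr0, h, hten, hroots, fun z hz =>
      ⟨{ζ : ℂ | r < ‖ζ‖}, ?_, N, hN1, fun n hn ζ hζ => hdom n hn ζ hζ⟩⟩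
    exact (isOpen_lt continuous_const continuous_norm).mem_nhds hz
  tfae_have 2 → 3 := dir23 p hdeg α hα0
  tfae_have 3 → 1 := dir31 p hdeg1 hdeg α hα0 hα2
  tfae_finish
end

section
/- Let (d_n)_{n≥1} be a sequence of positive integers with d_1 ≥ 1 and d_n ≥ 2 for all n ≥ 2, and let T_{d_n} denote the d_n-th Chebyshev polynomial of the first kind regarded as a polynomial over ℂ. Then the non-autonomous filled Julia set K[(T_{d_n})] := {z ∈ ℂ : the sequence ((T_{d_n} ∘ ⋯ ∘ T_{d_1})(z))_{n≥1} is bounded} equals the real segment [−1,1] embedded in ℂ, i.e. {z ∈ ℂ : Im z = 0 and −1 ≤ Re z ≤ 1}. -/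
/-- Evaluation of the composition `p_n ∘ ⋯ ∘ p_1` at a point (`p_1` applied first);
for `n = 0` it is the identity. -/
noncomputable def compEval (p : ℕ → Polynomial ℂ) : ℕ → ℂ → ℂ
  | 0, z => z
  | n + 1, z => (p (n + 1)).eval (compEval p n z)

lemma compEval_cheb (d : ℕ → ℕ) (θ : ℂ) (n : ℕ) :
    compEval (fun k => Polynomial.Chebyshev.T ℂ ((d k : ℤ))) n (Complex.cos θ)
      = Complex.cos ((∏ k ∈ Finset.Icc 1 n, d k : ℕ) * θ) := by
  induction n with
  | zero => simp [compEval]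
  | succ n ih =>
    rw [show compEval (fun k => Polynomial.Chebyshev.T ℂ ((d k : ℤ))) (n+1) (Complex.cos θ)
        = (Polynomial.Chebyshev.T ℂ ((d (n+1) : ℤ))).eval
          (compEval (fun k => Polynomial.Chebyshev.T ℂ ((d k : ℤ))) n (Complex.cos θ)) from rfl,
      ih, Polynomial.Chebyshev.T_complex_cos,
      Finset.prod_Icc_succ_top (by omega : 1 ≤ n + 1)]
    push_cast
    ring_nf

lemma sinh_abs' (x : ℝ) : |Real.sinh x| = Real.sinh |x| := by
  have hmono : ∀ a b : ℝ, a ≤ b → Real.sinh a ≤ Real.sinh b := fun a b h =>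
    Real.sinh_le_sinh.mpr h
  rcases le_total 0 x with h | h
  · rw [abs_of_nonneg h, abs_of_nonneg]
    simpa using hmono 0 x h
  · rw [abs_of_nonpos h, Real.sinh_neg, abs_of_nonpos]
    simpa using hmono x 0 h

lemma abs_cos_ge (w : ℂ) : |Real.sinh w.im| ≤ ‖Complex.cos w‖ := by
  have hcw : Complex.cos w = ((Real.cos w.re * Real.cosh w.im : ℝ) : ℂ)
      - ((Real.sin w.re * Real.sinh w.im : ℝ) : ℂ) * Complex.I := by
    rw [Complex.cos_eq, ← Complex.ofReal_cos, ← Complex.ofReal_cosh, ← Complex.ofReal_sin,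
      ← Complex.ofReal_sinh]
    push_cast
    ring
  have h1 : (‖Complex.cos w‖)^2
      = (Real.cos w.re * Real.cosh w.im)^2 + (Real.sin w.re * Real.sinh w.im)^2 := by
    rw [Complex.sq_norm, hcw, Complex.normSq_apply]
    simp only [Complex.sub_re, Complex.sub_im, Complex.mul_re, Complex.mul_im,
      Complex.I_re, Complex.I_im, Complex.ofReal_re, Complex.ofReal_im]
    ring
  have h2 : (Real.sin w.re)^2 + (Real.cos w.re)^2 = 1 := Real.sin_sq_add_cos_sq _
  have h3 : (Real.cosh w.im)^2 = 1 + (Real.sinh w.im)^2 := by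
    have := Real.cosh_sq w.im; linarith
  have h4 : |Real.sinh w.im|^2 ≤ (‖Complex.cos w‖)^2 := by
    rw [sq_abs, h1]; nlinarith
  nlinarith [abs_nonneg (Real.sinh w.im), norm_nonneg (Complex.cos w)]

theorem julia_of_chebyshev_eq_segment
    (d : ℕ → ℕ) (hd1 : 1 ≤ d 1) (hd : ∀ n ≥ 2, 2 ≤ d n) :
    {z : ℂ | ∃ M : ℝ, ∀ n ≥ 1,
        ‖compEval (fun k => Polynomial.Chebyshev.T ℂ ((d k : ℤ))) n z‖ ≤ M}
      = {z : ℂ | z.im = 0 ∧ -1 ≤ z.re ∧ z.re ≤ 1} := by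
  have hD : ∀ n ≥ 1, n ≤ ∏ k ∈ Finset.Icc 1 n, d k := by
    intro n hn
    induction n with
    | zero => omega
    | succ n ih =>
      rcases Nat.eq_or_lt_of_le hn with h | h
      · simp [← h, Finset.Icc_self, hd1]
      · have h1 : 1 ≤ n := by omega
        have := ih h1
        rw [Finset.prod_Icc_succ_top (by omega : 1 ≤ n + 1)]
        have h2 : 2 ≤ d (n + 1) := hd _ (by omega)
        calc n + 1 ≤ n * 2 := by omega
          _ ≤ (∏ k ∈ Finset.Icc 1 n, d k) * d (n+1) :=
            Nat.mul_le_mul this h2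
  ext z
  simp only [Set.mem_setOf_eq]
  constructor
  · rintro ⟨M, hM⟩
    obtain ⟨θ, hθ⟩ := Complex.cos_surjective z
    by_contra hz
    have him : θ.im ≠ 0 := by
      intro h
      apply hz
      have hre : θ = (θ.re : ℂ) := Complex.ext rfl h
      have hzz : z = ((Real.cos θ.re : ℝ) : ℂ) := by
        rw [← hθ, hre, ← Complex.ofReal_cos]
        simp
      rw [hzz]
      exact ⟨rfl, by rw [Complex.ofReal_re]; exact Real.neg_one_le_cos θ.re,
        by rw [Complex.ofReal_re]; exact Real.cos_le_one θ.re⟩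
    obtain ⟨n, hn⟩ := exists_nat_gt (M / |θ.im|)
    have hy : (0:ℝ) < |θ.im| := abs_pos.mpr him
    have key := hM (n+1) (by omega)
    rw [← hθ, compEval_cheb] at key
    set D := ∏ k ∈ Finset.Icc 1 (n+1), d k with hDdef
    have hDn : (n+1 : ℕ) ≤ D := hD (n+1) (by omega)
    have habs : |Real.sinh ((D:ℂ) * θ).im| ≤ M :=
      le_trans (abs_cos_ge _) key
    have him2 : ((D:ℂ) * θ).im = (D:ℝ) * θ.im := by simp
    rw [him2, sinh_abs', abs_mul, Nat.abs_cast] at habs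
    have hlt : (D:ℝ) * |θ.im| < Real.sinh ((D:ℝ) * |θ.im|) :=
      Real.self_lt_sinh_iff.mpr (by
        have hDpos : (0:ℝ) < (D:ℝ) := by exact_mod_cast Nat.lt_of_lt_of_le (Nat.succ_pos n) hDn
        positivity)
    have : M < (D:ℝ) * |θ.im| := by
      have h1 : (n:ℝ) + 1 ≤ (D:ℝ) := by exact_mod_cast hDn
      have h2 : M < (n:ℝ) * |θ.im| := by
        rw [div_lt_iff₀ hy] at hn; linarith
      nlinarith
    linarith
  · rintro ⟨h0, h1, h2⟩
    refine ⟨1, fun n _ => ?_⟩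
    have hz : z = Complex.cos (Real.arccos z.re : ℂ) := by
      rw [← Complex.ofReal_cos, Real.cos_arccos h1 h2]
      exact Complex.ext rfl h0
    rw [hz, compEval_cheb]
    set D := ∏ k ∈ Finset.Icc 1 n, d k
    have : ((D:ℂ) * (Real.arccos z.re : ℂ)) = ((D * Real.arccos z.re : ℝ) : ℂ) := by
      push_cast; ring
    rw [this, ← Complex.ofReal_cos, Complex.norm_real, Real.norm_eq_abs]
    exact Real.abs_cos_le_one _
end

section
/- Let P be a non-constant polynomial over ℂ, and define the sequence p_1 := P and p_n := T_n (the n-th Chebyshev polynomial of the first kind over ℂ) for n ≥ 2. Then the non-autonomous filled Julia set K[(p_n)] := {z ∈ ℂ : the sequence ((p_n ∘ ⋯ ∘ p_1)(z))_{n≥1} is bounded} equals P⁻¹([−1,1]), the preimage under P of the real segment {w ∈ ℂ : Im w = 0 and −1 ≤ Re w ≤ 1}. -/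
lemma abs_sinh_le_abs_cos (z : ℂ) :
    |Real.sinh z.im| ≤ ‖Complex.cos z‖ := by
  have hre : (Complex.cos z).re = Real.cos z.re * Real.cosh z.im := by
    rw [Complex.cos_eq]
    simp [Complex.cos_ofReal_re, Complex.cosh_ofReal_re, Complex.sin_ofReal_im,
      Complex.sinh_ofReal_im, Complex.cos_ofReal_im, Complex.cosh_ofReal_im]
  have him : (Complex.cos z).im = -(Real.sin z.re * Real.sinh z.im) := by
    rw [Complex.cos_eq]
    simp [Complex.sin_ofReal_re, Complex.sinh_ofReal_re, Complex.sin_ofReal_im,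
      Complex.sinh_ofReal_im, Complex.cos_ofReal_im, Complex.cosh_ofReal_im]
  have h1 : ‖Complex.cos z‖ ^ 2
      = (Complex.cos z).re ^ 2 + (Complex.cos z).im ^ 2 := by
    rw [← Complex.sq_norm_sub_sq_im]; ring
  rw [hre, him] at h1
  have h2 : Real.cosh z.im ^ 2 = Real.sinh z.im ^ 2 + 1 := Real.cosh_sq _
  have h3 : Real.sin z.re ^ 2 + Real.cos z.re ^ 2 = 1 := Real.sin_sq_add_cos_sq _
  have h4 : |Real.sinh z.im| ^ 2 ≤ ‖Complex.cos z‖ ^ 2 := by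
    rw [sq_abs]
    nlinarith [sq_nonneg (Real.cos z.re), sq_nonneg (Real.sin z.re * Real.sinh z.im)]
  nlinarith [abs_nonneg (Real.sinh z.im), norm_nonneg (Complex.cos z)]

lemma compEval_eq_T_factorial
    (P : Polynomial ℂ) (p : ℕ → Polynomial ℂ) (hp1 : p 1 = P)
    (hp : ∀ n ≥ 2, p n = Polynomial.Chebyshev.T ℂ (n : ℤ)) (z : ℂ) :
    ∀ n, 1 ≤ n → compEval p n z
      = (Polynomial.Chebyshev.T ℂ ((n.factorial : ℤ))).eval (P.eval z) := by
  intro n hn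
  induction n with
  | zero => omega
  | succ n ih =>
    rcases Nat.lt_or_ge 1 (n + 1) with h1 | h1
    · have hn1 : 1 ≤ n := by omega
      have h2 : 2 ≤ n + 1 := by omega
      have hfac : ((n + 1).factorial : ℤ) = ((n + 1 : ℕ) : ℤ) * (n.factorial : ℤ) := by
        push_cast [Nat.factorial_succ]; ring
      rw [show compEval p (n+1) z = (p (n+1)).eval (compEval p n z) from rfl,
        ih hn1, hp (n+1) h2, hfac, Polynomial.Chebyshev.T_mul, Polynomial.eval_comp]
    · obtain rfl : n = 0 := by omega
      simp [compEval, hp1, Nat.factorial, Polynomial.Chebyshev.T_one]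

theorem julia_preimage_of_segment
    (P : Polynomial ℂ) (hP : 1 ≤ P.natDegree)
    (p : ℕ → Polynomial ℂ) (hp1 : p 1 = P)
    (hp : ∀ n ≥ 2, p n = Polynomial.Chebyshev.T ℂ (n : ℤ)) :
    {z : ℂ | ∃ M : ℝ, ∀ n ≥ 1, ‖compEval p n z‖ ≤ M}
      = (fun z : ℂ => P.eval z) ⁻¹' {w : ℂ | w.im = 0 ∧ -1 ≤ w.re ∧ w.re ≤ 1} := by
  ext z
  set w : ℂ := P.eval z with hw
  have key := compEval_eq_T_factorial P p hp1 hp z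
  rw [← hw] at key
  simp only [Set.mem_setOf_eq, Set.mem_preimage, ← hw]
  constructor
  · rintro ⟨M, hM⟩
    obtain ⟨ζ, hζ⟩ := Complex.cos_surjective w
    by_cases him : ζ.im = 0
    · have hζr : ζ = (ζ.re : ℂ) := by
        apply Complex.ext <;> simp [him]
      have hwr : w = ((Real.cos ζ.re : ℝ) : ℂ) := by
        rw [← hζ, hζr]; exact (Complex.ofReal_cos ζ.re).symm
      rw [hwr]
      exact ⟨Complex.ofReal_im _, by rw [Complex.ofReal_re]; exact Real.neg_one_le_cos ζ.re,
        by rw [Complex.ofReal_re]; exact Real.cos_le_one ζ.re⟩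
    · exfalso
      obtain ⟨n, hnM⟩ := exists_nat_gt (M / |ζ.im|)
      have hn1 : 1 ≤ n + 1 := by omega
      have hMle := hM (n + 1) hn1
      rw [key (n + 1) hn1, ← hζ, Polynomial.Chebyshev.T_complex_cos] at hMle
      set k := (n + 1).factorial with hk
      have him' : (((k : ℤ) : ℂ) * ζ).im = (k : ℝ) * ζ.im := by
        simp
      have hineq : |Real.sinh ((k : ℝ) * ζ.im)|
          ≤ ‖Complex.cos (((k : ℤ) : ℂ) * ζ)‖ := by
        have h := abs_sinh_le_abs_cos (((k : ℤ) : ℂ) * ζ)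
        rwa [him'] at h
      have hks : (k : ℝ) * |ζ.im| ≤ |Real.sinh ((k : ℝ) * ζ.im)| := by
        rw [Real.abs_sinh]
        have h0 : |(k : ℝ) * ζ.im| = (k : ℝ) * |ζ.im| := by
          rw [abs_mul, abs_of_nonneg (by positivity : (0:ℝ) ≤ (k : ℝ))]
        rw [← h0]
        exact Real.self_le_sinh_iff.mpr (abs_nonneg _)
      have hnk : (n : ℝ) * |ζ.im| ≤ (k : ℝ) * |ζ.im| := by
        have hle : n ≤ k := le_trans (by omega) (Nat.self_le_factorial (n + 1))
        have hle' := (Nat.cast_le (α := ℝ)).mpr hle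
        nlinarith [abs_nonneg ζ.im]
      have habs : 0 < |ζ.im| := abs_pos.mpr him
      have hMn : M < (n : ℝ) * |ζ.im| := by
        rw [div_lt_iff₀ habs] at hnM; linarith
      linarith
  · rintro ⟨h0, h1, h2⟩
    refine ⟨1, fun n hn => ?_⟩
    have hwr : w = (w.re : ℂ) := by apply Complex.ext <;> simp [h0]
    set θ := Real.arccos w.re with hθ
    have hcos : Real.cos θ = w.re := Real.cos_arccos h1 h2
    have hwc : w = Complex.cos (θ : ℂ) := by
      rw [← Complex.ofReal_cos, hcos, ← hwr]
    rw [key n hn, hwc, Polynomial.Chebyshev.T_complex_cos]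
    have hc : ((n.factorial : ℤ) : ℂ) * (θ : ℂ) = ((n.factorial * θ : ℝ) : ℂ) := by
      push_cast; ring
    rw [hc, ← Complex.ofReal_cos, Complex.norm_real, Real.norm_eq_abs]
    exact Real.abs_cos_le_one _
end

section
/- Let p_n(z) := n^{2^n}·z² for every n ≥ 1. Then the non-autonomous filled Julia set K[(p_n)] := {z ∈ ℂ : the sequence ((p_n ∘ ⋯ ∘ p_1)(z))_{n≥1} is bounded} equals {0}. -/
lemma compEval_abs (z : ℂ) (n : ℕ) :
    ‖compEval (fun k => Polynomial.C ((k : ℂ) ^ (2 ^ k)) * Polynomial.X ^ 2) n z‖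
      = (‖z‖ * (Nat.factorial n)) ^ (2 ^ n) := by
  induction n with
  | zero => simp [compEval]
  | succ n ih =>
    have : compEval (fun k => Polynomial.C ((k : ℂ) ^ (2 ^ k)) * Polynomial.X ^ 2) (n+1) z
        = ((n+1 : ℂ) ^ (2 ^ (n+1))) *
          (compEval (fun k => Polynomial.C ((k : ℂ) ^ (2 ^ k)) * Polynomial.X ^ 2) n z) ^ 2 := by
      simp [compEval]
    rw [this]
    rw [norm_mul, norm_pow, norm_pow, ih]
    have habs : ‖(n:ℂ)+1‖ = (n:ℝ)+1 := by
      rw [show ((n:ℂ)+1) = ((n+1 : ℕ) : ℂ) by push_cast; ring, Complex.norm_natCast]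
      push_cast; ring
    rw [habs, Nat.factorial_succ]
    push_cast
    rw [← pow_mul]
    have h2 : 2 ^ n * 2 = 2 ^ (n+1) := by ring
    rw [h2, mul_pow, mul_pow, mul_pow]
    ring

theorem julia_singleton_zero :
    {z : ℂ | ∃ M : ℝ, ∀ n ≥ 1,
        ‖compEval (fun k => Polynomial.C ((k : ℂ) ^ (2 ^ k)) * Polynomial.X ^ 2) n z‖ ≤ M}
      = {0} := by
  ext z
  simp only [Set.mem_setOf_eq, Set.mem_singleton_iff]
  constructor
  · rintro ⟨M, hM⟩
    by_contra hz
    have hz0 : 0 < ‖z‖ := by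
      simpa [norm_pos_iff] using hz
    obtain ⟨n, hn⟩ := exists_nat_gt (max (2 / ‖z‖) M)
    have hn1 : 1 ≤ n := by
      by_contra h
      interval_cases n
      · simp at hn
        have := hn.2
        have := hn.1
        nlinarith [div_nonneg (by norm_num : (0:ℝ) ≤ 2) hz0.le]
    have h2le : 2 ≤ ‖z‖ * (Nat.factorial n) := by
      have hfac : (n : ℝ) ≤ (Nat.factorial n : ℝ) := by
        exact_mod_cast Nat.self_le_factorial n
      have h1 : 2 / ‖z‖ < n := lt_of_le_of_lt (le_max_left _ _) hn
      have : 2 / ‖z‖ < (Nat.factorial n : ℝ) := lt_of_lt_of_le h1 hfac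
      calc (2:ℝ) = (2 / ‖z‖) * ‖z‖ := by field_simp
        _ ≤ (Nat.factorial n : ℝ) * ‖z‖ := by nlinarith
        _ = ‖z‖ * (Nat.factorial n) := by ring
    have key := hM n hn1
    rw [compEval_abs] at key
    have h1 : (2:ℝ) ^ (2^n) ≤ (‖z‖ * (Nat.factorial n)) ^ (2 ^ n) :=
      pow_le_pow_left₀ (by norm_num) h2le _
    have h2 : (n:ℝ) < 2 ^ (2^n) := by
      have a : n < 2 ^ n := Nat.lt_two_pow_self (n := n)
      have b : 2 ^ n ≤ 2 ^ (2^n) := Nat.pow_le_pow_right (by norm_num) (Nat.le_of_lt (Nat.lt_two_pow_self (n := n)))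
      exact_mod_cast lt_of_lt_of_le a b
    have hMn : M < n := lt_of_le_of_lt (le_max_right _ _) hn
    linarith
  · rintro rfl
    refine ⟨0, fun n _ => ?_⟩
    rw [compEval_abs]
    simp
end

section
/- Let q_1(z) := z² − 1 and q_n(z) := n^{2^n}·z² for every n ≥ 2. Then the non-autonomous filled Julia set K[(q_n)] := {z ∈ ℂ : the sequence ((q_n ∘ ⋯ ∘ q_1)(z))_{n≥1} is bounded} equals {−1, 1}. -/
theorem julia_pair_neg_one_one
    (q : ℕ → Polynomial ℂ)
    (hq1 : q 1 = Polynomial.X ^ 2 - 1)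
    (hq : ∀ n ≥ 2, q n = Polynomial.C ((n : ℂ) ^ (2 ^ n)) * Polynomial.X ^ 2) :
    {z : ℂ | ∃ M : ℝ, ∀ n ≥ 1, ‖compEval q n z‖ ≤ M}
      = {-1, 1} := by
  ext z
  simp only [Set.mem_setOf_eq, Set.mem_insert_iff, Set.mem_singleton_iff]
  have h1 : compEval q 1 z = z ^ 2 - 1 := by
    show (q 1).eval (compEval q 0 z) = _
    rw [hq1]; simp [compEval]
  constructor
  · rintro ⟨M, hM⟩
    by_contra hz
    push_neg at hz
    obtain ⟨hz1, hz2⟩ := hz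
    have hne : z ^ 2 - 1 ≠ 0 := by
      intro h
      have : (z - 1) * (z + 1) = 0 := by linear_combination h
      rcases mul_eq_zero.1 this with h | h
      · exact hz2 (sub_eq_zero.1 h)
      · exact hz1 (eq_neg_of_add_eq_zero_left h)
    set c : ℝ := ‖z ^ 2 - 1‖ with hc
    have hc0 : 0 < c := norm_pos_iff.mpr hne
    have hs0 : 0 < Real.sqrt c := Real.sqrt_pos.2 hc0
    have key : ∀ n : ℕ, 1 ≤ n →
        ‖compEval q n z‖
          = (Real.sqrt c * (n.factorial : ℝ)) ^ (2 ^ n) := by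
      intro n hn
      induction n with
      | zero => omega
      | succ n ih =>
        rcases Nat.eq_or_lt_of_le hn with h | h
        · rw [← h] at *
          simp [h1, Real.sq_sqrt hc0.le, hc]
        · have hn1 : 1 ≤ n := by omega
          have hw := ih hn1
          have hq' := hq (n + 1) (by omega)
          have : compEval q (n + 1) z
              = ((n + 1 : ℕ) : ℂ) ^ (2 ^ (n + 1)) * (compEval q n z) ^ 2 := by
            show (q (n + 1)).eval (compEval q n z) = _
            rw [hq']; simp
          rw [this, norm_mul, norm_pow, norm_pow, Complex.norm_natCast, hw]
          have e1 : ((Real.sqrt c * (n.factorial : ℝ)) ^ (2 ^ n)) ^ 2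
              = (Real.sqrt c * (n.factorial : ℝ)) ^ (2 ^ (n + 1)) := by
            rw [← pow_mul, pow_succ]
          rw [e1, Nat.factorial_succ, ← mul_pow]
          push_cast
          ring_nf
    -- choose large n
    obtain ⟨N, hN⟩ : ∃ N : ℕ, 1 ≤ N ∧ max M 1 < Real.sqrt c * (N.factorial : ℝ) := by
      obtain ⟨N, hN⟩ := exists_nat_gt (max M 1 / Real.sqrt c)
      refine ⟨N + 1, by omega, ?_⟩
      have hfac : (N : ℝ) ≤ ((N + 1).factorial : ℝ) := by
        exact_mod_cast le_trans (Nat.le_succ N) (Nat.self_le_factorial _)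
      have := (div_lt_iff₀ hs0).1 hN
      nlinarith
    obtain ⟨hN1, hNlt⟩ := hN
    have hb1 : (1 : ℝ) ≤ Real.sqrt c * (N.factorial : ℝ) :=
      le_of_lt (lt_of_le_of_lt (le_max_right M 1) hNlt)
    have : Real.sqrt c * (N.factorial : ℝ)
        ≤ (Real.sqrt c * (N.factorial : ℝ)) ^ (2 ^ N) :=
      le_self_pow₀ hb1 (by positivity)
    have hMN := hM N hN1
    rw [key N hN1] at hMN
    exact absurd (lt_of_lt_of_le hNlt (le_trans this (le_trans hMN (le_max_left M 1)))) (lt_irrefl _)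
  · intro hz
    refine ⟨0, ?_⟩
    have hzero : ∀ n : ℕ, 1 ≤ n → compEval q n z = 0 := by
      intro n hn
      induction n with
      | zero => omega
      | succ n ih =>
        rcases Nat.eq_or_lt_of_le hn with h | h
        · rw [← h, h1]
          rcases hz with h | h <;> rw [h] <;> ring
        · have hn1 : 1 ≤ n := by omega
          have hq' := hq (n + 1) (by omega)
          show (q (n + 1)).eval (compEval q n z) = 0
          rw [ih hn1, hq']; simp
    intro n hn
    rw [hzero n hn]; simp
end

section
/- Let t_n := (1/2^{n−1})·T_n for n ≥ 1, where T_n is the n-th Chebyshev polynomial of the first kind regarded as a polynomial over ℂ. Then the real segment [−1,1], embedded in ℂ as {z ∈ ℂ : Im z = 0 and −1 ≤ Re z ≤ 1}, is contained in the non-autonomous filled Julia set K[(t_n)] := {z ∈ ℂ : the sequence ((t_n ∘ ⋯ ∘ t_1)(z))_{n≥1} is bounded}. -/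
/-- The `n`-th Chebyshev (minimal) polynomial on `[-1,1]` over `ℂ`:
`t_n = (1/2^(n-1)) T_n`. -/
noncomputable def chebMinimalC (n : ℕ) : Polynomial ℂ :=
  Polynomial.C ((1 : ℂ) / 2 ^ (n - 1)) * Polynomial.Chebyshev.T ℂ (n : ℤ)

theorem segment_subset_julia_of_minimal_chebyshev :
    {z : ℂ | z.im = 0 ∧ -1 ≤ z.re ∧ z.re ≤ 1}
      ⊆ {z : ℂ | ∃ M : ℝ, ∀ n ≥ 1, ‖compEval chebMinimalC n z‖ ≤ M} := by
  rintro z ⟨him, h1, h2⟩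
  refine ⟨1, ?_⟩
  have key : ∀ n : ℕ, ∃ x : ℝ, |x| ≤ 1 ∧ compEval chebMinimalC n z = (x : ℂ) := by
    intro n
    induction n with
    | zero =>
      refine ⟨z.re, abs_le.mpr ⟨h1, h2⟩, ?_⟩
      simp [compEval, Complex.ext_iff, him]
    | succ n ih =>
      obtain ⟨x, hx, hxe⟩ := ih
      have hx1 : -1 ≤ x := (abs_le.mp hx).1
      have hx2 : x ≤ 1 := (abs_le.mp hx).2
      set θ : ℝ := Real.arccos x with hθ
      have hcos : Real.cos θ = x := Real.cos_arccos hx1 hx2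
      refine ⟨Real.cos ((n + 1 : ℕ) * θ) / 2 ^ n, ?_, ?_⟩
      · rw [abs_div, abs_of_pos (by positivity : (0:ℝ) < 2 ^ n)]
        calc |Real.cos ((n + 1 : ℕ) * θ)| / 2 ^ n ≤ 1 / 2 ^ n := by
              gcongr; exact Real.abs_cos_le_one _
          _ ≤ 1 := by
              rw [div_le_one (by positivity)]
              exact one_le_pow₀ (by norm_num)
      · show (chebMinimalC (n + 1)).eval (compEval chebMinimalC n z) = _
        rw [hxe, chebMinimalC]
        have hxc : (x : ℂ) = Complex.cos (θ : ℂ) := by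
          rw [← Complex.ofReal_cos, hcos]
        rw [hxc]
        simp only [Polynomial.eval_mul, Polynomial.eval_C,
          Polynomial.Chebyshev.T_complex_cos]
        rw [show ((n + 1 : ℕ) : ℤ) * (θ : ℂ) = (((n + 1 : ℕ) * θ : ℝ) : ℂ) by
          push_cast; ring]
        rw [← Complex.ofReal_cos]
        push_cast
        ring
  intro n _
  obtain ⟨x, hx, hxe⟩ := key n
  rw [hxe, Complex.norm_real, Real.norm_eq_abs]
  exact hx
end

section
/- Let E_2 := {x + iy ∈ ℂ : (x/(5/4))² + (y/(3/4))² ≤ 1} be the filled ellipse with foci ±1 and semiaxes 5/4 and 3/4, and let T_n be the n-th Chebyshev polynomial of the first kind regarded as a polynomial over ℂ. Then for every n ≥ 1 and every z ∈ E_2 one has |T_n(z)| ≤ (2^n + 2^{−n})/2, and moreover T_n(5/4) = (2^n + 2^{−n})/2, so this bound is attained; equivalently, the maximum of |t_n| on E_2, where t_n := (1/2^{n−1})·T_n, equals 1 + 2^{−2n}. -/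
/-- The filled ellipse with foci `±1` and semiaxes `5/4` and `3/4`. -/
def filledEllipseE2 : Set ℂ :=
  {z : ℂ | (z.re / (5 / 4)) ^ 2 + (z.im / (3 / 4)) ^ 2 ≤ 1}

lemma T_eval_half_add_inv (w : ℂ) (hw : w ≠ 0) (n : ℕ) :
    (Polynomial.Chebyshev.T ℂ (n : ℤ)).eval ((w + w⁻¹) / 2) = (w ^ n + (w⁻¹) ^ n) / 2 := by
  induction n using Nat.twoStepInduction with
  | zero => simp [Polynomial.Chebyshev.T_zero]
  | one => simp [Polynomial.Chebyshev.T_one]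
  | more n ih1 ih2 =>
    have hc : ((n + 2 : ℕ) : ℤ) = (n : ℤ) + 2 := by push_cast; ring
    rw [hc, Polynomial.Chebyshev.T_add_two]
    have hc1 : ((n : ℤ) + 1) = ((n + 1 : ℕ) : ℤ) := by push_cast; ring
    simp only [Polynomial.eval_sub, Polynomial.eval_mul, Polynomial.eval_ofNat,
      Polynomial.eval_X, hc1, ih1, ih2]
    have hu : w * w⁻¹ = 1 := mul_inv_cancel₀ hw
    linear_combination ((w⁻¹ ^ n + w ^ n) / 2) * hu

lemma key_ineq (A : ℝ) (hA0 : 0 < A) (h1 : 1 / 2 ≤ A) (h2 : A ≤ 2) (n : ℕ) :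
    A ^ n + (1 / A) ^ n ≤ 2 ^ n + (1 / 2 : ℝ) ^ n := by
  have hfac : (2 : ℝ) ^ n + (1 / 2) ^ n - A ^ n - (1 / A) ^ n
      = (2 ^ n - A ^ n) * (1 - (1 / (2 * A)) ^ n) := by
    have e1 : (2:ℝ) ^ n * (1 / 2) ^ n = 1 := by rw [← mul_pow]; norm_num
    have e2 : A ^ n * (1 / A) ^ n = 1 := by rw [← mul_pow, mul_one_div_cancel hA0.ne', one_pow]
    rw [← one_div_mul_one_div, mul_pow]
    linear_combination (1 / A) ^ n * e1 - (1 / 2) ^ n * e2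
  have f1 : A ^ n ≤ 2 ^ n := pow_le_pow_left₀ hA0.le h2 n
  have f2 : (1 / (2 * A)) ^ n ≤ 1 := by
    apply pow_le_one₀
    · positivity
    · rw [div_le_one (by positivity)]; linarith
  nlinarith [mul_nonneg (sub_nonneg.2 f1) (sub_nonneg.2 f2)]

lemma foci_sum_le (z : ℂ) (hz : z ∈ filledEllipseE2) :
    ‖z - 1‖ + ‖z + 1‖ ≤ 5 / 2 := by
  have hz1 := hz
  simp only [filledEllipseE2, Set.mem_setOf_eq] at hz1
  set x := z.re with hx
  set y := z.im with hy
  have hx2 : x ^ 2 ≤ (5 / 4) ^ 2 := by nlinarith [sq_nonneg y]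
  have hxle : x ≤ 5 / 4 := by nlinarith [sq_nonneg (x - 5 / 4)]
  have hxge : -(5 / 4) ≤ x := by nlinarith [sq_nonneg (x + 5 / 4)]
  have h1 : ‖z - 1‖ ≤ 5 / 4 - (4 / 5) * x := by
    rw [Complex.norm_def, Complex.normSq_apply]
    have : (z - 1).re * (z - 1).re + (z - 1).im * (z - 1).im
        = (x - 1) ^ 2 + y ^ 2 := by simp [Complex.sub_re, Complex.sub_im]; ring
    rw [this]
    have hnn : (0:ℝ) ≤ 5 / 4 - (4 / 5) * x := by linarith
    rw [show (5 / 4 - (4 / 5) * x : ℝ) = Real.sqrt ((5 / 4 - (4 / 5) * x) ^ 2) by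
      rw [Real.sqrt_sq hnn]]
    apply Real.sqrt_le_sqrt
    nlinarith
  have h2 : ‖z + 1‖ ≤ 5 / 4 + (4 / 5) * x := by
    rw [Complex.norm_def, Complex.normSq_apply]
    have : (z + 1).re * (z + 1).re + (z + 1).im * (z + 1).im
        = (x + 1) ^ 2 + y ^ 2 := by simp [Complex.add_re, Complex.add_im]; ring
    rw [this]
    have hnn : (0:ℝ) ≤ 5 / 4 + (4 / 5) * x := by linarith
    rw [show (5 / 4 + (4 / 5) * x : ℝ) = Real.sqrt ((5 / 4 + (4 / 5) * x) ^ 2) by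
      rw [Real.sqrt_sq hnn]]
    apply Real.sqrt_le_sqrt
    nlinarith
  linarith

lemma exists_w (z : ℂ) (h : ‖z - 1‖ + ‖z + 1‖ ≤ 5 / 2) :
    ∃ w : ℂ, w ≠ 0 ∧ z = (w + w⁻¹) / 2 ∧ 1 / 2 ≤ ‖w‖ ∧ ‖w‖ ≤ 2 := by
  obtain ⟨s, hs⟩ : ∃ s : ℂ, s ^ 2 = z ^ 2 - 1 :=
    IsAlgClosed.exists_pow_nat_eq (z ^ 2 - 1) (by norm_num)
  set w := z + s with hwdef
  have hprod : w * (z - s) = 1 := by rw [hwdef]; linear_combination -hs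
  have hw0 : w ≠ 0 := left_ne_zero_of_mul_eq_one hprod
  have hinv : w⁻¹ = z - s := inv_eq_of_mul_eq_one_right hprod
  have hz_eq : z = (w + w⁻¹) / 2 := by rw [hinv, hwdef]; ring
  set A := ‖w‖ with hA
  have hA0 : 0 < A := norm_pos_iff.mpr hw0
  have hz1 : (z - 1) * (2 * w) = (w - 1) ^ 2 := by rw [hwdef]; linear_combination -hs
  have hz2 : (z + 1) * (2 * w) = (w + 1) ^ 2 := by rw [hwdef]; linear_combination -hs
  have habs1 : ‖z - 1‖ * (2 * A) = (‖w - 1‖) ^ 2 := by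
    have := congrArg norm hz1
    simpa [norm_mul, norm_pow] using this
  have habs2 : ‖z + 1‖ * (2 * A) = (‖w + 1‖) ^ 2 := by
    have := congrArg norm hz2
    simpa [norm_mul, norm_pow] using this
  have hsq : (‖w - 1‖) ^ 2 + (‖w + 1‖) ^ 2 = 2 * A ^ 2 + 2 := by
    rw [hA, Complex.sq_norm, Complex.sq_norm, Complex.sq_norm,
      Complex.normSq_apply, Complex.normSq_apply, Complex.normSq_apply]
    simp only [Complex.sub_re, Complex.sub_im, Complex.add_re, Complex.add_im,
      Complex.one_re, Complex.one_im]
    ring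
  have hkey : A ^ 2 + 1 ≤ (5 / 2) * A := by nlinarith
  exact ⟨w, hw0, hz_eq, by nlinarith, by nlinarith⟩

lemma abs_T_le (n : ℕ) (z : ℂ) (hz : z ∈ filledEllipseE2) :
    ‖(Polynomial.Chebyshev.T ℂ (n : ℤ)).eval z‖
      ≤ ((2 : ℝ) ^ n + (1 / 2 : ℝ) ^ n) / 2 := by
  obtain ⟨w, hw0, hz_eq, hA1, hA2⟩ := exists_w z (foci_sum_le z hz)
  set A := ‖w‖ with hA
  have hA0 : 0 < A := norm_pos_iff.mpr hw0
  rw [hz_eq, T_eval_half_add_inv w hw0 n]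
  have h1 : ‖(w ^ n + w⁻¹ ^ n) / 2‖ ≤ (A ^ n + (1 / A) ^ n) / 2 := by
    rw [norm_div, Complex.norm_two]
    apply div_le_div_of_nonneg_right ?_ (by norm_num)
    calc ‖w ^ n + w⁻¹ ^ n‖
        ≤ ‖w ^ n‖ + ‖w⁻¹ ^ n‖ := norm_add_le _ _
      _ = A ^ n + (1 / A) ^ n := by
          rw [norm_pow, norm_pow, norm_inv, one_div]
  refine h1.trans ?_
  apply div_le_div_of_nonneg_right ?_ (by norm_num)
  exact key_ineq A hA0 hA1 hA2 n

theorem chebyshev_max_on_ellipse (n : ℕ) (hn : 1 ≤ n) :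
    (∀ z ∈ filledEllipseE2,
        ‖(Polynomial.Chebyshev.T ℂ (n : ℤ)).eval z‖
          ≤ ((2 : ℝ) ^ (n : ℤ) + (2 : ℝ) ^ (-(n : ℤ))) / 2) ∧
    (Polynomial.Chebyshev.T ℂ (n : ℤ)).eval ((5 : ℂ) / 4)
        = ((2 : ℂ) ^ (n : ℤ) + (2 : ℂ) ^ (-(n : ℤ))) / 2 ∧
    IsGreatest ((fun z : ℂ => ‖(chebMinimalC n).eval z‖) '' filledEllipseE2)
        (1 + (2 : ℝ) ^ (-(2 * n : ℤ))) := by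
  obtain ⟨m, rfl⟩ : ∃ m, n = m + 1 := ⟨n - 1, by omega⟩
  set n := m + 1 with hndef
  -- real zpow conversions
  have er1 : (2 : ℝ) ^ (n : ℤ) = 2 ^ n := by rw [zpow_natCast]
  have er2 : (2 : ℝ) ^ (-(n : ℤ)) = (1 / 2 : ℝ) ^ n := by
    rw [zpow_neg, zpow_natCast, one_div, inv_pow]
  have er3 : (2 : ℝ) ^ (-(2 * n : ℤ)) = (1 / 2 : ℝ) ^ n * (1 / 2 : ℝ) ^ n := by
    rw [show (-(2 * n : ℤ)) = -(n : ℤ) + -(n : ℤ) by ring, zpow_add₀ (by norm_num : (2:ℝ) ≠ 0),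
      er2]
  have ec1 : (2 : ℂ) ^ (n : ℤ) = 2 ^ n := by rw [zpow_natCast]
  have ec2 : (2 : ℂ) ^ (-(n : ℤ)) = ((2 : ℂ) ⁻¹) ^ n := by
    rw [zpow_neg, zpow_natCast, inv_pow]
  have part1 : ∀ z ∈ filledEllipseE2,
      ‖(Polynomial.Chebyshev.T ℂ (n : ℤ)).eval z‖
        ≤ ((2 : ℝ) ^ (n : ℤ) + (2 : ℝ) ^ (-(n : ℤ))) / 2 := by
    intro z hz
    rw [er1, er2]
    exact abs_T_le n z hz
  have part2 : (Polynomial.Chebyshev.T ℂ (n : ℤ)).eval ((5 : ℂ) / 4)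
      = ((2 : ℂ) ^ (n : ℤ) + (2 : ℂ) ^ (-(n : ℤ))) / 2 := by
    rw [show (5 : ℂ) / 4 = ((2 : ℂ) + (2 : ℂ)⁻¹) / 2 by norm_num,
      T_eval_half_add_inv 2 two_ne_zero n, ec1, ec2]
  refine ⟨part1, part2, ?_, ?_⟩
  · -- membership: attained at 5/4
    refine ⟨(5 : ℂ) / 4, ?_, ?_⟩
    · show ((((5:ℂ)/4).re / (5 / 4)) ^ 2 + (((5:ℂ)/4).im / (3 / 4)) ^ 2 ≤ 1)
      rw [show (5 : ℂ) / 4 = ((5 / 4 : ℝ) : ℂ) by norm_num]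
      simp
    · show ‖(chebMinimalC n).eval ((5:ℂ)/4)‖ = 1 + (2 : ℝ) ^ (-(2 * n : ℤ))
      rw [chebMinimalC, Polynomial.eval_mul, Polynomial.eval_C, part2, ec1, ec2]
      rw [show n - 1 = m from rfl]
      rw [norm_mul, norm_div, norm_div, norm_one, norm_pow, Complex.norm_two]
      rw [show ‖2 ^ n + (2 : ℂ)⁻¹ ^ n‖ = 2 ^ n + (1/2 : ℝ) ^ n by
        rw [show (2 : ℂ) ^ n + (2 : ℂ)⁻¹ ^ n = (((2:ℝ) ^ n + (1/2 : ℝ) ^ n : ℝ) : ℂ) by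
          push_cast; norm_num, Complex.norm_of_nonneg (by positivity)]]
      rw [er3, hndef]
      simp only [pow_succ, one_div, inv_pow]
      have h : (2:ℝ)^m ≠ 0 := by positivity
      field_simp
  · -- upper bound
    rintro v ⟨z, hz, rfl⟩
    have hb := abs_T_le n z hz
    show ‖(chebMinimalC n).eval z‖ ≤ 1 + (2 : ℝ) ^ (-(2 * n : ℤ))
    rw [chebMinimalC, Polynomial.eval_mul, Polynomial.eval_C, norm_mul, norm_div, norm_one,
      norm_pow, Complex.norm_two, show n - 1 = m from rfl]
    have hcoef : (0:ℝ) < 1 / 2 ^ m := by positivity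
    calc 1 / 2 ^ m * ‖(Polynomial.Chebyshev.T ℂ (n : ℤ)).eval z‖
        ≤ 1 / 2 ^ m * (((2 : ℝ) ^ n + (1 / 2 : ℝ) ^ n) / 2) := by
          exact mul_le_mul_of_nonneg_left hb hcoef.le
      _ = 1 + (2 : ℝ) ^ (-(2 * n : ℤ)) := by
          rw [er3, hndef]
          simp only [pow_succ, one_div, inv_pow]
          have h : (2:ℝ)^m ≠ 0 := by positivity
          field_simp
end

section
/- Let t_n := (1/2^{n−1})·T_n for n ≥ 1, where T_n is the n-th Chebyshev polynomial of the first kind regarded as a polynomial over ℂ, and let K[(t_n)] := {z ∈ ℂ : the sequence ((t_n ∘ ⋯ ∘ t_1)(z))_{n≥1} is bounded}. Then: (a) every real number x with −5/4 ≤ x ≤ 5/4, viewed as an element of ℂ, belongs to K[(t_n)]; (b) the point z₀ := (4/5)·i belongs to K[(t_n)]; (c) z₀ does not belong to the filled ellipse E_2 := {x + iy ∈ ℂ : (x/(5/4))² + (y/(3/4))² ≤ 1}; consequently K[(t_n)] is not contained in E_2. -/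
open Polynomial Polynomial.Chebyshev

theorem cheb_half (r : ℝ) (hr : r ≠ 0) (n : ℕ) :
    (T ℝ (n : ℤ)).eval ((r + r⁻¹)/2) = (r ^ n + r⁻¹ ^ n)/2 := by
  induction n using Nat.strong_induction_on with
  | _ n ih =>
    match n with
    | 0 => simp [T_zero]
    | 1 => simp [T_one]
    | (m+2) =>
      push_cast
      rw [T_add_two]
      simp only [eval_sub, eval_mul, eval_ofNat, eval_X]
      rw [show ((m:ℤ)+1) = ((m+1 : ℕ) : ℤ) by push_cast; ring,
        ih (m+1) (by omega), ih m (by omega)]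
      field_simp
      linear_combination (r⁻¹ ^ m * r - r⁻¹ ^ m * r⁻¹) * mul_inv_cancel₀ hr

theorem cheb_bound (x : ℝ) (hx : |x| ≤ 5/4) (n : ℕ) :
    |(T ℝ (n : ℤ)).eval x| ≤ (2^n + 1)/2 := by
  rcases le_or_gt (|x|) 1 with h1 | h1
  · have hx1 : -1 ≤ x := by have := (abs_le.mp h1).1; linarith
    have hx2 : x ≤ 1 := (abs_le.mp h1).2
    rw [show x = Real.cos (Real.arccos x) from (Real.cos_arccos hx1 hx2).symm,
      T_real_cos]
    have := Real.abs_cos_le_one ((n : ℤ) * Real.arccos x)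
    have h2 : (1:ℝ) ≤ 2^n := one_le_pow₀ (by norm_num)
    linarith
  · -- 1 < |x| ≤ 5/4 : use r with x = (r + r⁻¹)/2, 1 ≤ |r| ≤ 2
    obtain ⟨r, hrne, hxr, habsr1, habsr⟩ :
        ∃ r : ℝ, r ≠ 0 ∧ x = (r + r⁻¹)/2 ∧ 1 ≤ |r| ∧ |r| ≤ 2 := by
      set s : ℝ := Real.sqrt (x^2 - 1) with hs
      have hx2 : (1:ℝ) < x^2 := by nlinarith [sq_abs x, sq_nonneg (|x| - 1), abs_nonneg x]
      have hs0 : 0 ≤ s := Real.sqrt_nonneg _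
      have hssq : s^2 = x^2 - 1 := Real.sq_sqrt (by linarith)
      have hsle : s ≤ 3/4 := by
        rw [show (3/4 : ℝ) = Real.sqrt ((3/4)^2) from (Real.sqrt_sq (by norm_num)).symm]
        apply Real.sqrt_le_sqrt
        nlinarith [sq_abs x, abs_nonneg x]
      rcases le_or_gt 0 x with hxp | hxn
      · have hax : x = |x| := (abs_of_nonneg hxp).symm
        have hxge : 1 < x := by linarith [hax ▸ h1]
        have hxle : x ≤ 5/4 := (abs_le.mp hx).2
        refine ⟨x + s, by positivity, ?_, ?_, ?_⟩
        · have hmul : (x + s) * (x - s) = 1 := by nlinarith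
          rw [inv_eq_of_mul_eq_one_right hmul]; ring
        · rw [abs_of_nonneg (by positivity)]; linarith
        · rw [abs_of_nonneg (by positivity)]; linarith
      · have hax : x = -|x| := by rw [abs_of_neg hxn]; ring
        have hxle : x < -1 := by nlinarith [abs_nonneg x]
        have hxge : -5/4 ≤ x := by linarith [(abs_le.mp hx).1]
        refine ⟨x - s, by intro h; nlinarith, ?_, ?_, ?_⟩
        · have hmul : (x - s) * (x + s) = 1 := by nlinarith
          rw [inv_eq_of_mul_eq_one_right hmul]; ring
        · rw [abs_of_nonpos (by linarith)]; linarith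
        · rw [abs_of_nonpos (by linarith)]; linarith
    rw [hxr, cheb_half r hrne n]
    have hrinv : |r⁻¹| ≤ 1 := by rw [abs_inv, inv_le_one_iff₀]; right; exact habsr1
    have key : |r ^ n + r⁻¹ ^ n| ≤ 2^n + 1 := by
      calc |r ^ n + r⁻¹ ^ n| ≤ |r ^ n| + |r⁻¹ ^ n| := abs_add_le _ _
        _ ≤ 2^n + 1 := by
            rw [abs_pow, abs_pow]
            have h1 : |r| ^ n ≤ 2 ^ n := pow_le_pow_left₀ (abs_nonneg r) habsr n
            have h2 : |r⁻¹| ^ n ≤ 1 := pow_le_one₀ (abs_nonneg _) hrinv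
            linarith
    rw [abs_div, abs_two]
    linarith

theorem evalC_real (y : ℝ) (n : ℕ) :
    (T ℂ (n : ℤ)).eval (y : ℂ) = Complex.ofReal ((T ℝ (n : ℤ)).eval y) := by
  rw [← map_T (algebraMap ℝ ℂ) (n : ℤ), eval_map]
  exact eval₂_at_apply (algebraMap ℝ ℂ) y

theorem step_bound (y : ℝ) (hy : |y| ≤ 5/4) (n : ℕ) (hn : 2 ≤ n) :
    ∃ y' : ℝ, (chebMinimalC n).eval (y : ℂ) = (y' : ℂ) ∧ |y'| ≤ 5/4 := by
  refine ⟨(1 / 2 ^ (n-1)) * (T ℝ (n : ℤ)).eval y, ?_, ?_⟩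
  · rw [chebMinimalC, eval_mul, eval_C, evalC_real]
    push_cast
    ring
  · rw [abs_mul]
    have hb := cheb_bound y hy n
    have hpos : (0:ℝ) < 2 ^ (n-1) := by positivity
    rw [abs_of_nonneg (by positivity : (0:ℝ) ≤ 1 / 2 ^ (n-1))]
    rw [div_mul_eq_mul_div, one_mul, div_le_iff₀ hpos]
    have h2n : (2:ℝ) ^ n = 2 * 2 ^ (n-1) := by
      rw [← pow_succ']
      congr 1
      omega
    have h4 : (4:ℝ) ≤ 2 ^ n := by
      calc (4:ℝ) = 2^2 := by norm_num
        _ ≤ 2^n := pow_le_pow_right₀ (by norm_num) hn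
    nlinarith [abs_nonneg ((T ℝ (n : ℤ)).eval y)]
  
theorem orbit_bound (z : ℂ) (m : ℕ) (hm : 1 ≤ m)
    (h : ∃ y : ℝ, compEval chebMinimalC m z = (y : ℂ) ∧ |y| ≤ 5/4) :
    ∀ n, m ≤ n → ∃ y : ℝ, compEval chebMinimalC n z = (y : ℂ) ∧ |y| ≤ 5/4 := by
  intro n hn
  induction n with
  | zero => omega
  | succ k ih =>
    rcases Nat.lt_or_ge m (k+1) with hlt | hge
    · obtain ⟨y, hy1, hy2⟩ := ih (by omega)
      obtain ⟨y', hy'1, hy'2⟩ := step_bound y hy2 (k+1) (by omega)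
      exact ⟨y', by rw [show compEval chebMinimalC (k+1) z
        = (chebMinimalC (k+1)).eval (compEval chebMinimalC k z) from rfl, hy1, hy'1], hy'2⟩
    · have : m = k + 1 := by omega
      rw [← this]; exact h

theorem compEval_one (z : ℂ) : compEval chebMinimalC 1 z = z := by
  show (chebMinimalC 1).eval z = z
  rw [chebMinimalC]
  norm_num [T_one]

theorem julia_of_minimal_chebyshev_not_subset_E2 :
    (∀ x : ℝ, -5/4 ≤ x → x ≤ 5/4 →
      (x : ℂ) ∈ {z : ℂ | ∃ M : ℝ, ∀ n ≥ 1, ‖compEval chebMinimalC n z‖ ≤ M}) ∧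
    ((4 / 5 : ℂ) * Complex.I
      ∈ {z : ℂ | ∃ M : ℝ, ∀ n ≥ 1, ‖compEval chebMinimalC n z‖ ≤ M}) ∧
    ((4 / 5 : ℂ) * Complex.I ∉ filledEllipseE2) ∧
    ¬ ({z : ℂ | ∃ M : ℝ, ∀ n ≥ 1, ‖compEval chebMinimalC n z‖ ≤ M}
        ⊆ filledEllipseE2) := by
  have hz0 : ((4 / 5 : ℂ) * Complex.I)
      ∈ {z : ℂ | ∃ M : ℝ, ∀ n ≥ 1, ‖compEval chebMinimalC n z‖ ≤ M} := by
    refine ⟨5/4, ?_⟩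
    intro n hn
    rcases Nat.lt_or_ge n 2 with h2 | h2
    · have : n = 1 := by omega
      rw [this, compEval_one, norm_mul]
      simp [Complex.norm_I]
      norm_num [Complex.norm_ofNat, norm_div]
    · have hbase : ∃ y : ℝ, compEval chebMinimalC 2 ((4/5 : ℂ) * Complex.I) = (y : ℂ)
          ∧ |y| ≤ 5/4 := by
        refine ⟨-57/50, ?_, by rw [abs_of_nonpos (by norm_num)]; norm_num⟩
        show (chebMinimalC 2).eval (compEval chebMinimalC 1 _) = _
        rw [compEval_one, chebMinimalC, show ((2:ℕ):ℤ) = 2 from rfl, T_two]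
        simp only [eval_mul, eval_C, eval_sub, eval_ofNat, eval_one, eval_pow, eval_X]
        rw [mul_pow, Complex.I_sq]
        push_cast
        ring
      obtain ⟨y, hy1, hy2⟩ := orbit_bound _ 2 (by norm_num) hbase n h2
      rw [hy1, Complex.norm_real, Real.norm_eq_abs]
      exact hy2
  refine ⟨?_, hz0, ?_, ?_⟩
  · intro x hx1 hx2
    refine ⟨5/4, ?_⟩
    intro n hn
    have hbase : ∃ y : ℝ, compEval chebMinimalC 1 (x : ℂ) = (y : ℂ) ∧ |y| ≤ 5/4 :=
      ⟨x, compEval_one _, abs_le.mpr ⟨by linarith, hx2⟩⟩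
    obtain ⟨y, hy1, hy2⟩ := orbit_bound _ 1 le_rfl hbase n hn
    rw [hy1, Complex.norm_real, Real.norm_eq_abs]
    exact hy2
  · intro h
    rw [filledEllipseE2, Set.mem_setOf_eq] at h
    have hre : ((4 / 5 : ℂ) * Complex.I).re = 0 := by simp
    have him : ((4 / 5 : ℂ) * Complex.I).im = 4/5 := by simp
    rw [hre, him] at h
    norm_num at h
  · intro h
    apply absurd (h hz0)
    intro h2
    rw [filledEllipseE2, Set.mem_setOf_eq] at h2
    have hre : ((4 / 5 : ℂ) * Complex.I).re = 0 := by simp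
    have him : ((4 / 5 : ℂ) * Complex.I).im = 4/5 := by simp
    rw [hre, him] at h2
    norm_num at h2
end
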